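/- arXiv:1804.07936 — 6 statements merged into one kernel-verified Lean document; each statement's English description precedes it below -/
import Mathlib

section
/- Let α, β ∈ ℂ with Re(α) ≥ 0 and Re(β) > −1, and set n = ⌊Re(α)⌋ + 1. Then for every real t > 0, the n-th derivative at t of the function g(t) = (1/Γ(n−α)) · ∫_0^t (t−u)^{n−α−1} · u^β du equals (Γ(β+1)/Γ(β−α+1)) · t^{β−α}. -/
open Complex MeasureTheory intervalIntegral

private lemma aux_hasDerivAt_cpow (s : ℂ) {x : ℝ} (hx : 0 < x) :
    HasDerivAt (fun y : ℝ => (y : ℂ) ^ s) (s * (x : ℂ) ^ (s - 1)) x := by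
  rcases eq_or_ne s 0 with rfl | hs
  · simp only [cpow_zero, zero_mul]
    exact hasDerivAt_const x 1
  · have h := hasDerivAt_ofReal_cpow_const' hx.ne' (show s - 1 ≠ -1 by
      intro h; exact hs (by linear_combination h))
    rw [sub_add_cancel] at h
    have h2 := h.const_mul s
    have heq : (fun y : ℝ => s * ((y : ℂ) ^ s / s)) = fun y : ℝ => (y : ℂ) ^ s := by
      funext y; field_simp
    rwa [heq] at h2

private lemma gamma_prod_aux (z : ℂ) (n : ℕ) (h : ∀ i < n, z ≠ (i : ℂ)) :
    Complex.Gamma (z + 1) = (∏ i ∈ Finset.range n, (z - i)) * Complex.Gamma (z + 1 - n) := by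
  induction n with
  | zero => simp
  | succ k ih =>
    have hz : z - k ≠ 0 := sub_ne_zero.2 (h k (Nat.lt_succ_self k))
    have harg : z + 1 - ((k + 1 : ℕ) : ℂ) = z - k := by push_cast; ring
    rw [Finset.prod_range_succ, harg, ih (fun i hi => h i (hi.trans (Nat.lt_succ_self k))),
      mul_assoc]
    congr 1
    rw [show z + 1 - (k : ℂ) = (z - k) + 1 by ring, Complex.Gamma_add_one _ hz]

private lemma gamma_prod (z : ℂ) (hz : -1 < z.re) (n : ℕ) :
    (∏ i ∈ Finset.range n, (z - i)) = Complex.Gamma (z + 1) / Complex.Gamma (z + 1 - n) := by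
  by_cases h : ∃ i < n, z = (i : ℂ)
  · obtain ⟨i, hi, rfl⟩ := h
    rw [Finset.prod_eq_zero (Finset.mem_range.2 hi) (by simp)]
    obtain ⟨m, hm⟩ : ∃ m, n = i + 1 + m := ⟨n - (i + 1), by omega⟩
    have harg : (i : ℂ) + 1 - n = -(m : ℕ) := by rw [hm]; push_cast; ring
    rw [harg, Complex.Gamma_neg_nat_eq_zero, div_zero]
  · push_neg at h
    have key := gamma_prod_aux z n h
    have hne : Complex.Gamma (z + 1 - n) ≠ 0 := by
      refine Complex.Gamma_ne_zero fun m hm => ?_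
      have hzval : z = ((n : ℂ) - 1 - m) := by linear_combination hm
      rcases lt_or_ge m n with hmn | hmn
      · obtain ⟨i, hi⟩ : ∃ i, n = m + 1 + i := ⟨n - (m + 1), by omega⟩
        refine h i (by omega) ?_
        rw [hzval, hi]; push_cast; ring
      · have hre : z.re = (n : ℝ) - 1 - m := by rw [hzval]; simp
        rw [hre] at hz
        have : (m : ℝ) < n := by linarith
        exact absurd (by exact_mod_cast this) (not_lt.2 hmn)
    rw [key, mul_div_assoc, div_self hne, mul_one]

/-- The Riemann–Liouville fractional derivative (order `α`, `Re α ≥ 0`, constant of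
differintegration `0`) of the power function `t ^ β`: with `n = ⌊Re α⌋ + 1`, the `n`-th
derivative of the fractional integral of order `n − α` of `u ^ β` at `t > 0` equals
`Γ(β+1)/Γ(β−α+1) · t^(β−α)`. -/
theorem lerch_stmt1 (α β : ℂ) (hα : 0 ≤ α.re) (hβ : -1 < β.re)
    (n : ℕ) (hn : (n : ℤ) = ⌊α.re⌋ + 1) :
    ∀ t : ℝ, 0 < t →
      iteratedDeriv n
          (fun t' : ℝ => (1 / Complex.Gamma ((n : ℂ) - α)) *
            ∫ u in (0:ℝ)..t', ((t' - u : ℝ) : ℂ) ^ ((n : ℂ) - α - 1) * (u : ℂ) ^ β) t =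
        (Complex.Gamma (β + 1) / Complex.Gamma (β - α + 1)) * (t : ℂ) ^ (β - α) := by
  intro t ht
  set s : ℂ := (n : ℂ) - α with hs_def
  set γ : ℂ := β + (n : ℂ) - α with hγ_def
  have hαn : α.re < (n : ℝ) := by
    have h1 := Int.lt_floor_add_one α.re
    have h2 : (n : ℝ) = (⌊α.re⌋ : ℝ) + 1 := by exact_mod_cast hn
    linarith
  have hs_re : 0 < s.re := by
    simp only [hs_def, sub_re, natCast_re]
    linarith
  have hβ1_re : 0 < (β + 1).re := by simp only [add_re, one_re]; linarith
  have hγre : -1 < γ.re := by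
    simp only [hγ_def, add_re, sub_re, natCast_re]
    linarith
  have hγ1_re : 0 < (γ + 1).re := by simp only [add_re, one_re]; linarith
  have hΓs : Complex.Gamma s ≠ 0 := Complex.Gamma_ne_zero_of_re_pos hs_re
  have hΓγ : Complex.Gamma (γ + 1) ≠ 0 := Complex.Gamma_ne_zero_of_re_pos hγ1_re
  set C : ℂ := Complex.Gamma (β + 1) / Complex.Gamma (γ + 1) with hC_def
  set f : ℝ → ℂ := fun t' : ℝ => (1 / Complex.Gamma ((n : ℂ) - α)) *
      ∫ u in (0:ℝ)..t', ((t' - u : ℝ) : ℂ) ^ ((n : ℂ) - α - 1) * (u : ℂ) ^ β with hf_def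
  -- Step 1: closed form of f on (0, ∞)
  have hfun : ∀ x : ℝ, 0 < x → f x = C * (x : ℂ) ^ γ := by
    intro x hx
    have hint : (∫ u in (0:ℝ)..x, ((x - u : ℝ) : ℂ) ^ ((n : ℂ) - α - 1) * (u : ℂ) ^ β)
        = ∫ u in (0:ℝ)..x, (u : ℂ) ^ ((β + 1) - 1) * ((x : ℂ) - u) ^ (s - 1) := by
      refine intervalIntegral.integral_congr fun u _ => ?_
      push_cast
      rw [hs_def]
      ring_nf
    have hB := Complex.Gamma_mul_Gamma_eq_betaIntegral hβ1_re hs_re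
    have hsum : β + 1 + s = γ + 1 := by rw [hs_def, hγ_def]; ring
    rw [hsum] at hB
    simp only [hf_def]
    rw [hint, Complex.betaIntegral_scaled (β + 1) s hx]
    rw [show β + 1 + s - 1 = γ by rw [hs_def, hγ_def]; ring]
    have hBval : Complex.betaIntegral (β + 1) s = Complex.Gamma (β + 1) * Complex.Gamma s /
        Complex.Gamma (γ + 1) := by
      rw [eq_div_iff hΓγ]
      linear_combination -hB
    rw [← hs_def, hBval, hC_def]
    field_simp
  -- Step 2: iterated derivatives of f on (0, ∞)
  have claim : ∀ k : ℕ, ∀ x : ℝ, 0 < x →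
      iteratedDeriv k f x = C * (∏ i ∈ Finset.range k, (γ - i)) * (x : ℂ) ^ (γ - k) := by
    intro k
    induction k with
    | zero =>
      intro x hx
      simp only [iteratedDeriv_zero, Finset.range_zero, Finset.prod_empty, mul_one,
        Nat.cast_zero, sub_zero]
      exact hfun x hx
    | succ k ih =>
      intro x hx
      rw [iteratedDeriv_succ]
      have hev : iteratedDeriv k f =ᶠ[nhds x]
          fun y : ℝ => (C * (∏ i ∈ Finset.range k, (γ - i))) * (y : ℂ) ^ (γ - k) := by
        filter_upwards [eventually_gt_nhds hx] with y hy
        rw [ih y hy]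
      rw [hev.deriv_eq]
      have hd := ((aux_hasDerivAt_cpow (γ - k) hx).const_mul
        (C * (∏ i ∈ Finset.range k, (γ - i)))).deriv
      rw [hd, Finset.prod_range_succ]
      have : γ - k - 1 = γ - (k + 1 : ℕ) := by push_cast; ring
      rw [this]
      ring
  rw [claim n t ht]
  rw [gamma_prod γ hγre n]
  have h1 : γ + 1 - n = β - α + 1 := by rw [hγ_def]; ring
  have h2 : γ - n = β - α := by rw [hγ_def]; ring
  rw [h1, h2, hC_def]
  congr 1
  rw [div_mul_div_comm, mul_comm (Complex.Gamma (β + 1)) (Complex.Gamma (γ + 1)),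
    mul_div_mul_left _ _ hΓγ]
end

section
/- Let α, k, t ∈ ℂ with Re(α) < 0 and Re(k) > 0. Then the function r ↦ r^{−α−1} · e^{k(t−r)} is integrable on (0, ∞), and (1/Γ(−α)) · ∫_0^∞ r^{−α−1} · e^{k(t−r)} dr = k^α · e^{kt}, where k^α is the principal branch (argument of k in (−π, π)). -/
open Complex MeasureTheory Set Metric Filter

lemma aux_real_int (s : ℂ) (hs : 0 < s.re) {c : ℝ} (hc : 0 < c) :
    IntegrableOn (fun x : ℝ => x ^ (s.re - 1) * Real.exp (-(c * x))) (Set.Ioi 0) := by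
  have h := Real.GammaIntegral_convergent hs
  rw [← mul_zero c, ← integrableOn_Ioi_comp_mul_left_iff _ _ hc] at h
  refine (IntegrableOn.congr_fun (h.const_mul (c ^ (-(s.re - 1))))  (fun x hx => ?_) measurableSet_Ioi)
  have hx' : (0:ℝ) < x := hx
  rw [Real.mul_rpow hc.le hx'.le]
  rw [show c ^ (-(s.re - 1)) * (Real.exp (-(c * x)) * (c ^ (s.re - 1) * x ^ (s.re - 1)))
      = (c ^ (-(s.re - 1)) * c ^ (s.re - 1)) * (x ^ (s.re - 1) * Real.exp (-(c * x))) by ring,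
    ← Real.rpow_add hc, neg_add_cancel, Real.rpow_zero, one_mul]

lemma aux_norm (s k : ℂ) {x : ℝ} (hx : 0 < x) :
    ‖(x : ℂ) ^ (s - 1) * Complex.exp (-(k * x))‖ = x ^ (s.re - 1) * Real.exp (-(k.re * x)) := by
  rw [norm_mul, Complex.norm_exp,
    Complex.norm_cpow_eq_rpow_re_of_pos hx, sub_re, one_re]
  congr 2
  simp

lemma aux_meas (s k : ℂ) :
    AEStronglyMeasurable (fun x : ℝ => (x : ℂ) ^ (s - 1) * Complex.exp (-(k * x)))
      (volume.restrict (Set.Ioi 0)) := by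
  refine (ContinuousOn.mul ?_ ?_).aestronglyMeasurable measurableSet_Ioi
  · exact Complex.continuous_ofReal.continuousOn.cpow_const
      (fun x hx => Or.inl (by simpa using (hx : (0:ℝ) < x)))
  · exact (Complex.continuous_exp.comp (by continuity)).continuousOn

lemma aux_cint (s k : ℂ) (hs : 0 < s.re) (hk : 0 < k.re) :
    IntegrableOn (fun x : ℝ => (x : ℂ) ^ (s - 1) * Complex.exp (-(k * x))) (Set.Ioi 0) := by
  refine (aux_real_int s hs hk).mono' (aux_meas s k) ?_
  filter_upwards [ae_restrict_mem measurableSet_Ioi] with x hx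
  rw [aux_norm s k hx]

lemma aux_deriv (s : ℂ) (hs : 0 < s.re) {k : ℂ} (hk : 0 < k.re) :
    HasDerivAt (fun k : ℂ => ∫ x in Set.Ioi (0:ℝ), (x : ℂ) ^ (s - 1) * Complex.exp (-(k * x)))
      (∫ x in Set.Ioi (0:ℝ), -((x : ℂ) ^ s * Complex.exp (-(k * x)))) k := by
  have hε : 0 < k.re / 2 := half_pos hk
  refine (hasDerivAt_integral_of_dominated_loc_of_deriv_le (F := fun k (x : ℝ) =>
      (x : ℂ) ^ (s - 1) * Complex.exp (-(k * x)))
      (F' := fun k (x : ℝ) => -((x : ℂ) ^ s * Complex.exp (-(k * x))))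
      (bound := fun x : ℝ => x ^ ((s+1).re - 1) * Real.exp (-(k.re / 2 * x)))
      (Metric.ball_mem_nhds k hε) (Filter.Eventually.of_forall fun k' => aux_meas s k') (aux_cint s k hs hk)
      ?_ ?_ ?_ ?_).2
  · exact ((aux_meas (s+1) k).congr
      (Filter.Eventually.of_forall fun x => by rw [add_sub_cancel_right])).neg
  · filter_upwards [ae_restrict_mem measurableSet_Ioi] with x hx k' hk'
    have hx' : (0:ℝ) < x := hx
    have hre : k.re / 2 ≤ k'.re := by
      have h1 : |k'.re - k.re| ≤ ‖k' - k‖ := by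
        simpa using Complex.abs_re_le_norm (k' - k)
      have h2 : ‖k' - k‖ < k.re / 2 := by
        simpa [Complex.dist_eq] using (mem_ball.mp hk')
      have := abs_sub_lt_iff.mp (lt_of_le_of_lt h1 h2)
      linarith [this.2]
    rw [norm_neg]
    have := aux_norm (s+1) k' hx'
    rw [add_sub_cancel_right] at this
    rw [this]
    gcongr
  · exact aux_real_int (s+1) (by simpa using by linarith : 0 < (s+1).re) hε
  · filter_upwards [ae_restrict_mem measurableSet_Ioi] with x hx k' _
    have hx' : (0:ℝ) < x := hx
    have h1 : HasDerivAt (fun k : ℂ => -(k * (x:ℂ))) (-(x:ℂ)) k' := by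
      have := ((hasDerivAt_id k').mul_const (x:ℂ)).neg
      rw [one_mul] at this
      exact this
    have h2 := (h1.cexp).const_mul ((x:ℂ) ^ (s - 1))
    convert h2 using 1
    rfl
    have hxne : (x:ℂ) ≠ 0 := Complex.ofReal_ne_zero.mpr hx'.ne'
    rw [show (x:ℂ) ^ s = (x:ℂ) ^ (s - 1) * (x:ℂ) by
      rw [Complex.cpow_sub _ _ hxne, Complex.cpow_one]; field_simp]
    ring

lemma aux_real_eq (s : ℂ) (hs : 0 < s.re) {r : ℝ} (hr : 0 < r) :
    ∫ x in Set.Ioi (0:ℝ), (x : ℂ) ^ (s - 1) * Complex.exp (-((r:ℂ) * x)) =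
      (r : ℂ) ^ (-s) * Complex.Gamma s := by
  have h := integral_cpow_mul_exp_neg_mul_Ioi hs hr
  rw [h, one_div, Complex.inv_cpow _ _ (by
    rw [Complex.arg_ofReal_of_nonneg hr.le]; exact Real.pi_ne_zero.symm), ← Complex.cpow_neg]

lemma aux_main (s k : ℂ) (hs : 0 < s.re) (hk : 0 < k.re) :
    ∫ x in Set.Ioi (0:ℝ), (x : ℂ) ^ (s - 1) * Complex.exp (-(k * x)) =
      k ^ (-s) * Complex.Gamma s := by
  set U : Set ℂ := {z | 0 < z.re} with hU
  have hUopen : IsOpen U := isOpen_lt continuous_const Complex.continuous_re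
  have hUconn : IsPreconnected U := (convex_halfSpace_re_gt 0).isPreconnected
  have hF : AnalyticOnNhd ℂ
      (fun k : ℂ => ∫ x in Set.Ioi (0:ℝ), (x : ℂ) ^ (s - 1) * Complex.exp (-(k * x))) U := by
    refine DifferentiableOn.analyticOnNhd (fun z hz => ?_) hUopen
    exact ((aux_deriv s hs hz).differentiableAt).differentiableWithinAt
  have hG : AnalyticOnNhd ℂ (fun k : ℂ => k ^ (-s) * Complex.Gamma s) U := by
    refine DifferentiableOn.analyticOnNhd (fun z hz => ?_) hUopen
    exact ((differentiableAt_id.cpow (differentiableAt_const (-s))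
      (Or.inl hz)).mul_const _).differentiableWithinAt
  have hfreq : ∃ᶠ z in nhdsWithin 1 {(1:ℂ)}ᶜ,
      (∫ x in Set.Ioi (0:ℝ), (x : ℂ) ^ (s - 1) * Complex.exp (-(z * x))) =
        z ^ (-s) * Complex.Gamma s := by
    have htend : Filter.Tendsto (fun n : ℕ => ((1 + 1/(n+1) : ℝ) : ℂ)) Filter.atTop
        (nhdsWithin 1 {(1:ℂ)}ᶜ) := by
      rw [tendsto_nhdsWithin_iff]
      constructor
      · have : Filter.Tendsto (fun n : ℕ => (1 + 1/(n+1) : ℝ)) Filter.atTop (nhds 1) := by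
          simpa using (tendsto_one_div_add_atTop_nhds_zero_nat (𝕜 := ℝ)).const_add 1
        simpa [Function.comp_def] using (Complex.continuous_ofReal.tendsto 1).comp this
      · refine Filter.Eventually.of_forall fun n => ?_
        simp only [Set.mem_compl_iff, Set.mem_singleton_iff]
        intro h
        have : (1 + 1/(n+1) : ℝ) = 1 := by exact_mod_cast h
        have hpos : (0:ℝ) < 1/(n+1) := by positivity
        linarith
    refine htend.frequently (Filter.Frequently.of_forall fun n => ?_)
    exact aux_real_eq s hs (by positivity)
  exact hF.eqOn_of_preconnected_of_frequently_eq hG hUconn (by simp [hU]) hfreq hk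

/-- The Riemann–Liouville fractional integral (order `α`, `Re α < 0`, constant of
differintegration `−∞`, along the horizontal leftward ray from `t`) of the exponential
function `e^{kt}` (with `Re k > 0`) is `k^α e^{kt}` (principal branch). -/
theorem lerch_stmt2 (α k t : ℂ) (hα : α.re < 0) (hk : 0 < k.re) :
    IntegrableOn (fun r : ℝ => (r : ℂ) ^ (-α - 1) * Complex.exp (k * (t - r))) (Set.Ioi 0) ∧
    (1 / Complex.Gamma (-α)) *
        ∫ r in Set.Ioi (0:ℝ), (r : ℂ) ^ (-α - 1) * Complex.exp (k * (t - r)) =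
      k ^ α * Complex.exp (k * t) := by
  have hs : 0 < (-α).re := by rw [Complex.neg_re]; linarith
  have hint := aux_cint (-α) k hs hk
  have key := aux_main (-α) k hs hk
  have heq : ∀ r : ℝ, (r : ℂ) ^ (-α - 1) * Complex.exp (k * (t - r)) =
      Complex.exp (k * t) * ((r : ℂ) ^ (-α - 1) * Complex.exp (-(k * r))) := by
    intro r
    rw [show k * (t - (r:ℂ)) = k * t + -(k * r) by ring, Complex.exp_add]
    ring
  constructor
  · exact IntegrableOn.congr_fun (hint.const_mul (Complex.exp (k * t)))
      (fun r _ => (heq r).symm) measurableSet_Ioi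
  · have hI : (∫ r in Set.Ioi (0:ℝ), (r : ℂ) ^ (-α - 1) * Complex.exp (k * (t - r))) =
        Complex.exp (k * t) * ∫ r in Set.Ioi (0:ℝ), (r : ℂ) ^ (-α - 1) * Complex.exp (-(k * r)) := by
      rw [← integral_const_mul]
      exact setIntegral_congr_fun measurableSet_Ioi fun r _ => heq r
    rw [hI, key, neg_neg]
    have hΓ : Complex.Gamma (-α) ≠ 0 := by
      refine Complex.Gamma_ne_zero fun m h => ?_
      rw [h] at hs
      have h2 : ((-(m:ℂ)).re : ℝ) = -(m:ℝ) := by simp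
      rw [h2] at hs
      have : (0:ℝ) ≤ (m:ℝ) := Nat.cast_nonneg m
      linarith
    field_simp
end

section
/- Let α, k, t ∈ ℂ with −1 < Re(α) < 0, Re(k) ≥ 0, and k ≠ 0. Then the improper integral lim_{R→∞} (1/Γ(−α)) · ∫_0^R r^{−α−1} · e^{k(t−r)} dr exists and equals k^α · e^{kt}, where k^α is the principal branch (argument of k in (−π, π)). -/
open Complex MeasureTheory Filter intervalIntegral Set

namespace LerchStmt3

lemma norm_eq (k c : ℂ) {r : ℝ} (hr : 0 < r) :
    ‖(r : ℂ) ^ c * Complex.exp (-(k * r))‖ = r ^ c.re * Real.exp (-(k.re * r)) := by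
  rw [norm_mul,
    Complex.norm_cpow_eq_rpow_re_of_pos hr, Complex.norm_exp]
  congr 2
  simp [Complex.mul_re]

lemma norm_le {k : ℂ} (hk : 0 ≤ k.re) (c : ℂ) {r : ℝ} (hr : 0 < r) :
    ‖(r : ℂ) ^ c * Complex.exp (-(k * r))‖ ≤ r ^ c.re := by
  rw [norm_eq k c hr]
  refine mul_le_of_le_one_right (Real.rpow_nonneg hr.le _) ?_
  rw [Real.exp_le_one_iff]
  simp only [neg_nonpos]
  exact mul_nonneg hk hr.le

lemma contOn (c k : ℂ) :
    ContinuousOn (fun r : ℝ => (r : ℂ) ^ c * Complex.exp (-(k * r))) (Ioi 0) := by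
  apply ContinuousOn.mul
  · exact ContinuousOn.cpow continuous_ofReal.continuousOn continuousOn_const
      (fun x hx => Complex.ofReal_mem_slitPlane.2 hx)
  · exact (Complex.continuous_exp.comp
      ((continuous_const.mul Complex.continuous_ofReal).neg)).continuousOn

lemma int01 (s k : ℂ) (hs : 0 < s.re) (hk : 0 ≤ k.re) :
    IntegrableOn (fun r : ℝ => (r : ℂ) ^ (s - 1) * Complex.exp (-(k * r))) (Ioc 0 1) := by
  have hb : IntegrableOn (fun r : ℝ => r ^ (s.re - 1)) (Ioc 0 1) := by
    have := intervalIntegral.intervalIntegrable_rpow' (a := 0) (b := 1)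
      (by linarith : (-1 : ℝ) < s.re - 1)
    rwa [intervalIntegrable_iff_integrableOn_Ioc_of_le zero_le_one] at this
  refine hb.mono' ?_ ?_
  · exact ((contOn (s - 1) k).mono Ioc_subset_Ioi_self).aestronglyMeasurable measurableSet_Ioc
  · filter_upwards [ae_restrict_mem measurableSet_Ioc] with r hr
    simpa [Complex.sub_re] using norm_le hk (s - 1) hr.1

lemma int2 (s k : ℂ) (hs : s.re < 1) (hk : 0 ≤ k.re) :
    IntegrableOn (fun r : ℝ => (r : ℂ) ^ (s - 2) * Complex.exp (-(k * r))) (Ioi 1) := by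
  have hb : IntegrableOn (fun r : ℝ => r ^ (s.re - 2)) (Ioi 1) :=
    integrableOn_Ioi_rpow_of_lt (by linarith) one_pos
  refine hb.mono' ?_ ?_
  · exact ((contOn (s - 2) k).mono (fun x (hx : x ∈ Ioi (1:ℝ)) => mem_Ioi.2 (lt_trans one_pos hx))).aestronglyMeasurable
      measurableSet_Ioi
  · filter_upwards [ae_restrict_mem measurableSet_Ioi] with r hr
    simpa [Complex.sub_re] using norm_le hk (s - 2) (lt_trans one_pos hr)

lemma intIoi0 (s k : ℂ) (hs : 0 < s.re) (hk : 0 < k.re) :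
    IntegrableOn (fun r : ℝ => (r : ℂ) ^ (s - 1) * Complex.exp (-(k * r))) (Ioi 0) := by
  have hb : IntegrableOn (fun r : ℝ => r ^ (s.re - 1) * Real.exp (-(k.re * r))) (Ioi 0) := by
    have := integrableOn_rpow_mul_exp_neg_mul_rpow (p := 1) (s := s.re - 1) (b := k.re)
      (by linarith) one_pos hk
    simpa [Real.rpow_one, neg_mul] using this
  refine hb.mono' ?_ ?_
  · exact (contOn (s - 1) k).aestronglyMeasurable measurableSet_Ioi
  · filter_upwards [ae_restrict_mem measurableSet_Ioi] with r hr
    rw [norm_eq k (s - 1) hr]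
    simp [Complex.sub_re]


lemma hasDerivAt_pow (c : ℂ) {x : ℝ} (hx : 0 < x) :
    HasDerivAt (fun y : ℝ => (y : ℂ) ^ c) (c * (x : ℂ) ^ (c - 1)) x :=
  ((Complex.hasStrictDerivAt_cpow_const
    (Complex.ofReal_mem_slitPlane.2 hx)).hasDerivAt).comp_ofReal

lemma hasDerivAt_expaux (k : ℂ) (hk0 : k ≠ 0) (x : ℝ) :
    HasDerivAt (fun y : ℝ => -Complex.exp (-(k * y)) / k) (Complex.exp (-(k * x))) x := by
  have h1 : HasDerivAt (fun z : ℂ => -Complex.exp (-(k * z)) / k)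
      (Complex.exp (-(k * x))) (x : ℂ) := by
    have h : HasDerivAt (fun z : ℂ => -(k * z)) (-k) (x : ℂ) := by
      simpa using ((hasDerivAt_id ((x : ℝ) : ℂ)).const_mul k).fun_neg
    have := (h.cexp.fun_neg).div_const k
    refine this.congr_deriv ?_
    rw [mul_neg, neg_neg, mul_div_assoc, div_self hk0, mul_one]
  exact h1.comp_ofReal

lemma ibp (s k : ℂ) (hk0 : k ≠ 0) {R : ℝ} (hR : 1 ≤ R) :
    ∫ r in (1:ℝ)..R, (r : ℂ) ^ (s - 1) * Complex.exp (-(k * r))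
      = (R : ℂ) ^ (s - 1) * (-Complex.exp (-(k * R)) / k) + Complex.exp (-k) / k
        + ((s - 1) / k) * ∫ r in (1:ℝ)..R, (r : ℂ) ^ (s - 2) * Complex.exp (-(k * r)) := by
  have hpos : ∀ x ∈ Set.uIcc (1:ℝ) R, (0:ℝ) < x := by
    intro x hx
    rcases Set.mem_uIcc.1 hx with h | h
    · linarith [h.1]
    · linarith [h.1]
  have hu : ∀ x ∈ Set.uIcc (1:ℝ) R, HasDerivAt (fun y : ℝ => (y : ℂ) ^ (s - 1))
      ((s - 1) * (x : ℂ) ^ (s - 2)) x := by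
    intro x hx
    convert hasDerivAt_pow (s - 1) (hpos x hx) using 3
    ring
  have hv : ∀ x ∈ Set.uIcc (1:ℝ) R, HasDerivAt (fun y : ℝ => -Complex.exp (-(k * y)) / k)
      (Complex.exp (-(k * x))) x := fun x _ => hasDerivAt_expaux k hk0 x
  have hiu : IntervalIntegrable (fun x : ℝ => (s - 1) * (x : ℂ) ^ (s - 2) : ℝ → ℂ) volume 1 R := by
    apply ContinuousOn.intervalIntegrable
    exact continuousOn_const.mul (ContinuousOn.cpow continuous_ofReal.continuousOn
      continuousOn_const (fun x hx => Complex.ofReal_mem_slitPlane.2 (hpos x hx)))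
  have hiv : IntervalIntegrable (fun x : ℝ => Complex.exp (-(k * x))) volume 1 R :=
    ((Complex.continuous_exp.comp
      ((continuous_const.mul Complex.continuous_ofReal).neg))).intervalIntegrable 1 R
  have key := intervalIntegral.integral_mul_deriv_eq_deriv_mul hu hv hiu hiv
  rw [key]
  rw [show ∫ x in (1:ℝ)..R, ((s - 1) * (x:ℂ) ^ (s - 2)) * (-Complex.exp (-(k * x)) / k)
      = (-(s-1)/k) * ∫ x in (1:ℝ)..R, (x:ℂ) ^ (s - 2) * Complex.exp (-(k * x)) by
    rw [← intervalIntegral.integral_const_mul]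
    apply intervalIntegral.integral_congr
    intro x hx
    field_simp]
  simp only [Complex.ofReal_one, Complex.one_cpow, one_mul]
  field_simp
  ring

noncomputable def L (s k : ℂ) : ℂ :=
  (∫ r in (0:ℝ)..1, (r : ℂ) ^ (s - 1) * Complex.exp (-(k * r))) + Complex.exp (-k) / k
    + ((s - 1) / k) * ∫ r in Ioi (1:ℝ), (r : ℂ) ^ (s - 2) * Complex.exp (-(k * r))

lemma trunc_tendsto (s k : ℂ) (hs1 : 0 < s.re) (hs2 : s.re < 1) (hk : 0 ≤ k.re) (hk0 : k ≠ 0) :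
    Tendsto (fun R : ℝ => ∫ r in (0:ℝ)..R, (r : ℂ) ^ (s - 1) * Complex.exp (-(k * r)))
      atTop (nhds (L s k)) := by
  have hint01 : IntervalIntegrable (fun r : ℝ => (r : ℂ) ^ (s - 1) * Complex.exp (-(k * r)))
      volume 0 1 := by
    rw [intervalIntegrable_iff_integrableOn_Ioc_of_le zero_le_one]
    exact int01 s k hs1 hk
  have h1 : Tendsto (fun R : ℝ => (R : ℂ) ^ (s - 1) * (-Complex.exp (-(k * R)) / k))
      atTop (nhds 0) := by
    apply squeeze_zero_norm' (a := fun R : ℝ => R ^ (s.re - 1) * ‖k‖⁻¹)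
    · filter_upwards [eventually_gt_atTop (0:ℝ)] with R hR
      have he : ‖(R : ℂ) ^ (s - 1) * (-Complex.exp (-(k * R)) / k)‖
          = ‖(R : ℂ) ^ (s - 1) * Complex.exp (-(k * R))‖ * ‖k‖⁻¹ := by
        rw [norm_mul, norm_div, norm_neg, norm_mul]; ring
      rw [he]
      have hb := norm_le hk (s - 1) hR
      rw [Complex.sub_re, Complex.one_re] at hb
      exact mul_le_mul_of_nonneg_right hb (inv_nonneg.2 (norm_nonneg k))
    · have h := (tendsto_rpow_neg_atTop (y := 1 - s.re) (by linarith)).mul_const ‖k‖⁻¹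
      rw [zero_mul] at h
      convert h using 3 with R
      ring_nf
  have h2 : Tendsto (fun R : ℝ => ∫ r in (1:ℝ)..R, (r : ℂ) ^ (s - 2) * Complex.exp (-(k * r)))
      atTop (nhds (∫ r in Ioi (1:ℝ), (r : ℂ) ^ (s - 2) * Complex.exp (-(k * r)))) :=
    intervalIntegral_tendsto_integral_Ioi 1 (int2 s k hs2 hk) tendsto_id
  have hφ : Tendsto (fun R : ℝ =>
      (∫ r in (0:ℝ)..1, (r : ℂ) ^ (s - 1) * Complex.exp (-(k * r)))
        + ((R : ℂ) ^ (s - 1) * (-Complex.exp (-(k * R)) / k) + Complex.exp (-k) / k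
          + ((s - 1) / k) * ∫ r in (1:ℝ)..R, (r : ℂ) ^ (s - 2) * Complex.exp (-(k * r))))
      atTop (nhds (L s k)) := by
    have hc : Tendsto (fun _ : ℝ => ∫ r in (0:ℝ)..1, (r : ℂ) ^ (s - 1) * Complex.exp (-(k * r)))
        atTop (nhds (∫ r in (0:ℝ)..1, (r : ℂ) ^ (s - 1) * Complex.exp (-(k * r)))) :=
      tendsto_const_nhds
    have hsum := hc.add ((h1.add (tendsto_const_nhds (x := Complex.exp (-k) / k))).add
      (h2.const_mul ((s - 1) / k)))
    simpa [L, zero_add, add_assoc] using hsum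
  apply hφ.congr'
  filter_upwards [eventually_ge_atTop (1:ℝ)] with R hR
  have h1R : IntervalIntegrable (fun r : ℝ => (r : ℂ) ^ (s - 1) * Complex.exp (-(k * r)))
      volume 1 R := by
    apply ContinuousOn.intervalIntegrable
    apply (contOn (s - 1) k).mono
    intro x hx
    rcases Set.mem_uIcc.1 hx with h | h
    · exact lt_of_lt_of_le one_pos h.1
    · exact lt_of_lt_of_le one_pos (le_trans hR h.1)
  rw [← intervalIntegral.integral_add_adjacent_intervals hint01 h1R, ibp s k hk0 hR]

lemma real_case (s : ℂ) (hs : 0 < s.re) {r : ℝ} (hr : 0 < r) :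
    ∫ x in Ioi (0:ℝ), (x : ℂ) ^ (s - 1) * Complex.exp (-((r : ℂ) * x))
      = Complex.Gamma s * (r : ℂ) ^ (-s) := by
  have h := Complex.integral_cpow_mul_exp_neg_mul_Ioi (a := s) hs hr
  rw [h, mul_comm]
  congr 1
  rw [one_div, Complex.inv_cpow _ _ (by
    rw [Complex.arg_ofReal_of_nonneg hr.le]; exact Real.pi_ne_zero.symm), ← Complex.cpow_neg]

lemma halfplane (s : ℂ) (hs : 0 < s.re) {k : ℂ} (hk : 0 < k.re) :
    ∫ x in Ioi (0:ℝ), (x : ℂ) ^ (s - 1) * Complex.exp (-(k * x))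
      = Complex.Gamma s * k ^ (-s) := by
  set U : Set ℂ := {z | 0 < z.re} with hU
  have hUo : IsOpen U := isOpen_lt continuous_const Complex.continuous_re
  set f : ℂ → ℂ := fun w => ∫ x in Ioi (0:ℝ), (x : ℂ) ^ (s - 1) * Complex.exp (-(w * x)) with hf
  set g : ℂ → ℂ := fun w => Complex.Gamma s * w ^ (-s) with hg
  have hdf : ∀ w ∈ U, DifferentiableAt ℂ f w := by
    intro w hw
    have hwre : 0 < w.re := hw
    set ε : ℝ := w.re / 2 with hε
    have hε_pos : 0 < ε := by positivity
    have key := _root_.hasDerivAt_integral_of_dominated_loc_of_deriv_le (μ := volume.restrict (Ioi 0))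
      (F := fun w (x : ℝ) => (x : ℂ) ^ (s - 1) * Complex.exp (-(w * x)))
      (F' := fun w (x : ℝ) => (x : ℂ) ^ (s - 1) * (Complex.exp (-(w * x)) * -(x : ℂ)))
      (x₀ := w) (bound := fun x : ℝ => x ^ s.re * Real.exp (-(ε * x))) (Metric.ball_mem_nhds w hε_pos)
      ?_ ?_ ?_ ?_ ?_ ?_
    · exact key.2.differentiableAt
    · filter_upwards with w'
      exact ((contOn (s - 1) w')).aestronglyMeasurable measurableSet_Ioi
    · exact intIoi0 s w hs hwre
    · apply ContinuousOn.aestronglyMeasurable _ measurableSet_Ioi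
      have hc : ContinuousOn (fun x : ℝ => ((x : ℂ) ^ (s - 1) * Complex.exp (-(w * x))) * -(x : ℂ))
          (Ioi 0) := (contOn (s - 1) w).mul (continuous_ofReal.neg.continuousOn)
      exact hc.congr (fun x hx => by ring)
    · filter_upwards [ae_restrict_mem measurableSet_Ioi] with x hx
      intro w' hw'
      have hw're : ε < w'.re := by
        have h1 : |(w' - w).re| ≤ ‖w' - w‖ := Complex.abs_re_le_norm _
        have h2 : ‖w' - w‖ < ε := by simpa [Metric.mem_ball, dist_eq_norm] using hw'
        have := abs_lt.1 (lt_of_le_of_lt h1 h2)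
        simp only [Complex.sub_re] at this
        have : -(ε) < w'.re - w.re := this.1
        rw [hε] at *
        linarith
      rw [norm_mul, norm_mul, norm_neg]
      have hxe : ‖(x : ℂ) ^ (s - 1)‖ * ‖Complex.exp (-(w' * x))‖
          = x ^ (s.re - 1) * Real.exp (-(w'.re * x)) := by
        have := norm_eq w' (s - 1) hx
        rw [norm_mul] at this
        simpa [Complex.sub_re] using this
      calc ‖(x : ℂ) ^ (s - 1)‖ * (‖Complex.exp (-(w' * x))‖ * ‖(x:ℂ)‖)
          = (x ^ (s.re - 1) * Real.exp (-(w'.re * x))) * x := by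
            rw [← mul_assoc, hxe, Complex.norm_real, Real.norm_of_nonneg (le_of_lt hx)]
        _ = x ^ s.re * Real.exp (-(w'.re * x)) := by
            rw [mul_right_comm, ← Real.rpow_add_one (ne_of_gt hx) (s.re - 1), sub_add_cancel]
        _ ≤ x ^ s.re * Real.exp (-(ε * x)) := by
            apply mul_le_mul_of_nonneg_left _ (Real.rpow_nonneg hx.le _)
            apply Real.exp_le_exp.2
            apply neg_le_neg
            exact mul_le_mul_of_nonneg_right hw're.le hx.le
    · have hb : IntegrableOn (fun x : ℝ => x ^ s.re * Real.exp (-(ε * x))) (Ioi 0) := by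
        have := integrableOn_rpow_mul_exp_neg_mul_rpow (p := 1) (s := s.re) (b := ε)
          (by linarith) one_pos hε_pos
        simpa [Real.rpow_one, neg_mul] using this
      exact hb
    · filter_upwards [ae_restrict_mem measurableSet_Ioi] with x hx
      intro w' _
      have h : HasDerivAt (fun w : ℂ => -(w * x)) (-(x : ℂ)) w' := by
        simpa using ((hasDerivAt_id w').mul_const ((x : ℝ) : ℂ)).fun_neg
      exact (h.cexp).const_mul ((x : ℂ) ^ (s - 1))
  have hdg : ∀ w ∈ U, DifferentiableAt ℂ g w := by
    intro w hw
    exact ((Complex.hasStrictDerivAt_cpow_const (c := -s)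
      (Or.inl hw)).hasDerivAt.differentiableAt).const_mul _
  have han_f : AnalyticOnNhd ℂ f U :=
    DifferentiableOn.analyticOnNhd (fun w hw => (hdf w hw).differentiableWithinAt) hUo
  have han_g : AnalyticOnNhd ℂ g U :=
    DifferentiableOn.analyticOnNhd (fun w hw => (hdg w hw).differentiableWithinAt) hUo
  have hpre : IsPreconnected U := (convex_halfSpace_re_gt 0).isPreconnected
  have h1U : (1 : ℂ) ∈ U := by simp [hU]
  have hfreq : ∃ᶠ z in nhdsWithin 1 {(1:ℂ)}ᶜ, f z = g z := by
    have hseq : Tendsto (fun n : ℕ => (1 : ℂ) + ((n + 1 : ℝ)⁻¹ : ℝ)) atTop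
        (nhdsWithin 1 {(1:ℂ)}ᶜ) := by
      rw [tendsto_nhdsWithin_iff]
      constructor
      · have : Tendsto (fun n : ℕ => ((n + 1 : ℝ)⁻¹ : ℝ)) atTop (nhds 0) := by
          simpa [one_div] using tendsto_one_div_add_atTop_nhds_zero_nat (𝕜 := ℝ)
        have := ((Complex.continuous_ofReal.tendsto 0).comp this).const_add (1 : ℂ)
        simpa using this
      · filter_upwards with n
        simp only [mem_compl_iff, mem_singleton_iff, add_eq_left]
        intro h
        exact (by positivity : (0:ℝ) < (n + 1 : ℝ)⁻¹).ne' (Complex.ofReal_eq_zero.1 h)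
    apply hseq.frequently
    apply Frequently.of_forall
    intro n
    have hpos : (0:ℝ) < 1 + (n + 1 : ℝ)⁻¹ := by positivity
    have := real_case s hs hpos
    simp only [hf, hg]
    rw [show ((1 : ℂ) + ((n + 1 : ℝ)⁻¹ : ℝ)) = (((1 + (n + 1:ℝ)⁻¹ : ℝ)) : ℂ) by push_cast; ring]
    exact this
  have := han_f.eqOn_of_preconnected_of_frequently_eq han_g hpre h1U hfreq
  exact this hk


lemma L_eq_pos (s : ℂ) (hs1 : 0 < s.re) (hs2 : s.re < 1) {k : ℂ} (hk : 0 < k.re) :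
    L s k = Complex.Gamma s * k ^ (-s) := by
  have hk0 : k ≠ 0 := fun h => by simp [h] at hk
  have h1 := trunc_tendsto s k hs1 hs2 hk.le hk0
  have h2 : Tendsto (fun R : ℝ => ∫ r in (0:ℝ)..R, (r : ℂ) ^ (s - 1) * Complex.exp (-(k * r)))
      atTop (nhds (∫ r in Ioi (0:ℝ), (r : ℂ) ^ (s - 1) * Complex.exp (-(k * r)))) :=
    intervalIntegral_tendsto_integral_Ioi 0 (intIoi0 s k hs1 hk) tendsto_id
  rw [← halfplane s hs1 hk]
  exact tendsto_nhds_unique h1 h2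

lemma L_eq (s k : ℂ) (hs1 : 0 < s.re) (hs2 : s.re < 1) (hk : 0 ≤ k.re) (hk0 : k ≠ 0) :
    L s k = Complex.Gamma s * k ^ (-s) := by
  rcases lt_or_eq_of_le hk with hpos | heq
  · exact L_eq_pos s hs1 hs2 hpos
  · set kn : ℕ → ℂ := fun n => k + (((n + 1 : ℝ)⁻¹ : ℝ) : ℂ) with hkn
    have hknre : ∀ n, 0 < (kn n).re := by
      intro n
      simp only [hkn, Complex.add_re, Complex.ofReal_re, ← heq, zero_add]
      positivity
    have htend : Tendsto kn atTop (nhds k) := by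
      have h0 : Tendsto (fun n : ℕ => ((n + 1 : ℝ)⁻¹ : ℝ)) atTop (nhds 0) := by
        simpa [one_div] using tendsto_one_div_add_atTop_nhds_zero_nat (𝕜 := ℝ)
      have h2 := ((Complex.continuous_ofReal.tendsto 0).comp h0).const_add k
      simp only [Complex.ofReal_zero, add_zero] at h2
      exact h2
    have hL : ∀ n, L s (kn n) = Complex.Gamma s * (kn n) ^ (-s) :=
      fun n => L_eq_pos s hs1 hs2 (hknre n)
    have hA : Tendsto (fun n : ℕ => ∫ r in (0:ℝ)..1, (r : ℂ) ^ (s - 1)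
        * Complex.exp (-(kn n * r))) atTop
        (nhds (∫ r in (0:ℝ)..1, (r : ℂ) ^ (s - 1) * Complex.exp (-(k * r)))) := by
      simp only [intervalIntegral.integral_of_le zero_le_one]
      apply MeasureTheory.tendsto_integral_of_dominated_convergence
        (fun r : ℝ => r ^ (s.re - 1))
      · intro n
        exact ((contOn (s - 1) (kn n)).mono Ioc_subset_Ioi_self).aestronglyMeasurable
          measurableSet_Ioc
      · have := intervalIntegral.intervalIntegrable_rpow' (a := 0) (b := 1)
          (by linarith : (-1 : ℝ) < s.re - 1)
        rwa [intervalIntegrable_iff_integrableOn_Ioc_of_le zero_le_one] at this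
      · intro n
        filter_upwards [ae_restrict_mem measurableSet_Ioc] with r hr
        simpa [Complex.sub_re] using norm_le (hknre n).le (s - 1) hr.1
      · filter_upwards [ae_restrict_mem measurableSet_Ioc] with r hr
        have hc : Continuous (fun z : ℂ => Complex.exp (-(z * r))) :=
          Complex.continuous_exp.comp ((continuous_id.mul continuous_const).neg)
        exact ((hc.tendsto k).comp htend).const_mul ((r : ℂ) ^ (s - 1))
    have hB : Tendsto (fun n : ℕ => Complex.exp (-(kn n)) / kn n) atTop
        (nhds (Complex.exp (-k) / k)) :=
      Tendsto.div ((Complex.continuous_exp.tendsto (-k)).comp htend.neg) htend hk0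
    have hC : Tendsto (fun n : ℕ => ∫ r in Ioi (1:ℝ), (r : ℂ) ^ (s - 2)
        * Complex.exp (-(kn n * r))) atTop
        (nhds (∫ r in Ioi (1:ℝ), (r : ℂ) ^ (s - 2) * Complex.exp (-(k * r)))) := by
      apply MeasureTheory.tendsto_integral_of_dominated_convergence
        (fun r : ℝ => r ^ (s.re - 2))
      · intro n
        exact ((contOn (s - 2) (kn n)).mono (fun x (hx : x ∈ Ioi (1:ℝ)) => mem_Ioi.2 (lt_trans one_pos hx))).aestronglyMeasurable
          measurableSet_Ioi
      · exact integrableOn_Ioi_rpow_of_lt (by linarith) one_pos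
      · intro n
        filter_upwards [ae_restrict_mem measurableSet_Ioi] with r hr
        simpa [Complex.sub_re] using norm_le (hknre n).le (s - 2) (lt_trans one_pos hr)
      · filter_upwards [ae_restrict_mem measurableSet_Ioi] with r hr
        have hc : Continuous (fun z : ℂ => Complex.exp (-(z * r))) :=
          Complex.continuous_exp.comp ((continuous_id.mul continuous_const).neg)
        exact ((hc.tendsto k).comp htend).const_mul ((r : ℂ) ^ (s - 2))
    have hD : Tendsto (fun n : ℕ => (s - 1) / kn n) atTop (nhds ((s - 1) / k)) :=
      Tendsto.div tendsto_const_nhds htend hk0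
    have hLn : Tendsto (fun n : ℕ => L s (kn n)) atTop (nhds (L s k)) := by
      simpa only [L] using (hA.add hB).add (hD.mul hC)
    have hslit : k ∈ Complex.slitPlane := by
      rw [Complex.mem_slitPlane_iff]
      right
      intro him
      exact hk0 (Complex.ext heq.symm him)
    have hRn : Tendsto (fun n : ℕ => Complex.Gamma s * (kn n) ^ (-s)) atTop
        (nhds (Complex.Gamma s * k ^ (-s))) :=
      (((continuousAt_cpow_const (b := -s) hslit).tendsto).comp htend).const_mul _
    exact tendsto_nhds_unique (hLn.congr (fun n => hL n)) hRn

end LerchStmt3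

open LerchStmt3 in
/-- For `−1 < Re α < 0`, `Re k ≥ 0`, `k ≠ 0`, the improper Riemann–Liouville fractional
integral of the exponential `e^{kt}` (constant of differintegration `−∞`) exists as the
limit `R → ∞` of `(1/Γ(−α)) ∫_0^R r^{−α−1} e^{k(t−r)} dr` and equals `k^α e^{kt}`
(principal branch). -/
theorem lerch_stmt3 (α k t : ℂ) (hα1 : -1 < α.re) (hα2 : α.re < 0)
    (hk : 0 ≤ k.re) (hk0 : k ≠ 0) :
    Tendsto
      (fun R : ℝ => (1 / Complex.Gamma (-α)) *
        ∫ r in (0:ℝ)..R, (r : ℂ) ^ (-α - 1) * Complex.exp (k * (t - r)))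
      atTop (nhds (k ^ α * Complex.exp (k * t))) := by
  set s : ℂ := -α with hs
  have hs1 : 0 < s.re := by simp [hs]; linarith
  have hs2 : s.re < 1 := by simp [hs]; linarith
  have key := trunc_tendsto s k hs1 hs2 hk hk0
  rw [L_eq s k hs1 hs2 hk hk0] at key
  have hGamma : Complex.Gamma s ≠ 0 := Complex.Gamma_ne_zero_of_re_pos hs1
  have heq : ∀ R : ℝ, (1 / Complex.Gamma (-α)) *
      ∫ r in (0:ℝ)..R, (r : ℂ) ^ (-α - 1) * Complex.exp (k * (t - r))
      = (Complex.exp (k * t) / Complex.Gamma s) *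
        ∫ r in (0:ℝ)..R, (r : ℂ) ^ (s - 1) * Complex.exp (-(k * r)) := by
    intro R
    rw [show ∫ r in (0:ℝ)..R, (r : ℂ) ^ (-α - 1) * Complex.exp (k * (t - r))
        = Complex.exp (k * t) * ∫ r in (0:ℝ)..R, (r : ℂ) ^ (s - 1) * Complex.exp (-(k * r)) by
      rw [← intervalIntegral.integral_const_mul]
      apply intervalIntegral.integral_congr
      intro x hx
      dsimp only
      rw [hs]
      rw [show k * (t - (x:ℂ)) = k * t + -(k * x) by ring, Complex.exp_add]
      ring]
    rw [hs]
    field_simp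
  have key2 := key.const_mul (Complex.exp (k * t) / Complex.Gamma s)
  apply Tendsto.congr (fun R => (heq R).symm)
  convert key2 using 1
  rw [hs]
  rw [neg_neg]
  field_simp
  rw [mul_div_assoc, div_self (show Complex.Gamma (-α) ≠ 0 from hGamma), mul_one]
end

section
/- Let α, k ∈ ℂ with Re(α) ≥ 0 and Re(k) > 0, and set n = ⌊Re(α)⌋ + 1. Then the function g : ℂ → ℂ defined by g(t) = (1/Γ(n−α)) · ∫_0^∞ r^{n−α−1} · e^{k(t−r)} dr is n times complex differentiable on ℂ, and its n-th derivative at every t ∈ ℂ equals k^α · e^{kt}, where k^α is the principal branch (argument of k in (−π, π)). -/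
open Complex MeasureTheory

open Set Filter

lemma realIntAux {s c : ℝ} (hs : 0 < s) (hc : 0 < c) :
    IntegrableOn (fun t : ℝ => t ^ (s - 1) * Real.exp (-(c * t))) (Set.Ioi 0) := by
  have h0 : IntegrableOn (fun x : ℝ => Real.exp (-x) * x ^ (s - 1)) (Set.Ioi 0) :=
    Real.GammaIntegral_convergent hs
  have h1 : IntegrableOn (fun x : ℝ => Real.exp (-(c * x)) * (c * x) ^ (s - 1))
      (Set.Ioi 0) := by
    have := (integrableOn_Ioi_comp_mul_left_iff
      (fun x : ℝ => Real.exp (-x) * x ^ (s - 1)) 0 hc).mpr (by simpa using h0)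
    simpa using this
  have h2 := h1.const_mul (c ^ (1 - s))
  refine IntegrableOn.congr_fun h2 (fun x hx => ?_) measurableSet_Ioi
  have hx0 : (0:ℝ) < x := hx
  rw [Real.mul_rpow hc.le hx0.le]
  rw [show c ^ (1 - s) * (Real.exp (-(c * x)) * (c ^ (s - 1) * x ^ (s - 1)))
      = (c ^ (1 - s) * c ^ (s - 1)) * (x ^ (s - 1) * Real.exp (-(c * x))) by ring,
    ← Real.rpow_add hc]
  norm_num

lemma contAux (a : ℂ) {k : ℂ} :
    ContinuousOn (fun t : ℝ => (t : ℂ) ^ (a - 1) * Complex.exp (-(k * t))) (Set.Ioi 0) := by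
  apply ContinuousOn.mul
  · intro t ht
    exact ((continuousAt_cpow_const (Complex.ofReal_mem_slitPlane.2 ht)).comp
      Complex.continuous_ofReal.continuousAt).continuousWithinAt
  · exact (Complex.continuous_exp.comp
      ((continuous_const.mul Complex.continuous_ofReal).neg)).continuousOn

lemma cIntAux (a : ℂ) (ha : 0 < a.re) {k : ℂ} (hk : 0 < k.re) :
    IntegrableOn (fun t : ℝ => (t : ℂ) ^ (a - 1) * Complex.exp (-(k * t))) (Set.Ioi 0) := by
  refine Integrable.mono' ((realIntAux ha hk)) ((contAux a).aestronglyMeasurable measurableSet_Ioi) ?_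
  filter_upwards [ae_restrict_mem measurableSet_Ioi] with t ht
  have ht0 : (0:ℝ) < t := ht
  rw [norm_mul, Complex.norm_cpow_eq_rpow_re_of_pos ht0,
    Complex.norm_exp]
  simp only [Complex.sub_re, Complex.one_re, Complex.neg_re, Complex.mul_re,
    Complex.ofReal_re, Complex.ofReal_im, mul_zero, sub_zero]
  exact le_of_eq rfl

lemma keyIntegral (a : ℂ) (ha : 0 < a.re) {k : ℂ} (hk : 0 < k.re) :
    ∫ t in Set.Ioi (0:ℝ), (t : ℂ) ^ (a - 1) * Complex.exp (-(k * t)) =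
      Complex.Gamma a * k ^ (-a) := by
  set U : Set ℂ := {z : ℂ | 0 < z.re} with hU
  have hUopen : IsOpen U := isOpen_lt continuous_const Complex.continuous_re
  have hUconn : IsPreconnected U := (convex_halfSpace_re_gt 0).isPreconnected
  set F : ℂ → ℂ := fun z => ∫ t in Set.Ioi (0:ℝ), (t : ℂ) ^ (a - 1) * Complex.exp (-(z * t))
  set G : ℂ → ℂ := fun z => Complex.Gamma a * z ^ (-a)
  have hFd : DifferentiableOn ℂ F U := by
    intro z hz
    have hz' : 0 < z.re := hz
    set ε : ℝ := z.re / 2 with hε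
    have hε0 : 0 < ε := by positivity
    have hball : ∀ x ∈ Metric.ball z ε, 0 < x.re ∧ ε ≤ x.re := by
      intro x hx
      have : |x.re - z.re| ≤ ‖x - z‖ := by
        simpa using Complex.abs_re_le_norm (x - z)
      have h2 : ‖x - z‖ < ε := by simpa [Metric.mem_ball, dist_eq_norm] using hx
      have := (abs_lt.mp (lt_of_le_of_lt this h2)).1
      constructor <;> [linarith; linarith]
    have key := hasDerivAt_integral_of_dominated_loc_of_deriv_le (μ := volume.restrict (Set.Ioi 0))
      (F := fun z (t : ℝ) => (t : ℂ) ^ (a - 1) * Complex.exp (-(z * t)))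
      (F' := fun z (t : ℝ) => (t : ℂ) ^ (a - 1) * (Complex.exp (-(z * t)) * -(t : ℂ)))
      (x₀ := z)
      (bound := fun t : ℝ => t ^ ((a.re + 1) - 1) * Real.exp (-(ε * t)))
      (Metric.ball_mem_nhds z hε0) ?_ (cIntAux a ha hz') ?_ ?_ ?_ ?_
    · exact (key.2.differentiableAt).differentiableWithinAt
    · filter_upwards with x
      exact ((contAux a).aestronglyMeasurable measurableSet_Ioi)
    · apply ContinuousOn.aestronglyMeasurable ?_ measurableSet_Ioi
      exact ((contAux a (k := z)).mul ((Complex.continuous_ofReal.neg).continuousOn)).congr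
        (fun t _ => by simp only [Pi.neg_apply, Pi.mul_apply]; ring)
    · filter_upwards [ae_restrict_mem measurableSet_Ioi] with t ht x hx
      have ht0 : (0:ℝ) < t := ht
      obtain ⟨hx1, hx2⟩ := hball x hx
      rw [norm_mul, norm_mul, Complex.norm_cpow_eq_rpow_re_of_pos ht0,
        Complex.norm_exp, norm_neg, Complex.norm_real,
        Real.norm_eq_abs, abs_of_pos ht0]
      simp only [Complex.sub_re, Complex.one_re, Complex.neg_re, Complex.mul_re,
        Complex.ofReal_re, Complex.ofReal_im, mul_zero, sub_zero]
      have h1 : t ^ (a.re - 1) * (Real.exp (-(x.re * t)) * t)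
          = t ^ ((a.re + 1) - 1) * Real.exp (-(x.re * t)) := by
        rw [show (a.re + 1) - 1 = (a.re - 1) + 1 by ring, Real.rpow_add ht0,
          Real.rpow_one]
        ring
      rw [h1]
      have : Real.exp (-(x.re * t)) ≤ Real.exp (-(ε * t)) := by
        apply Real.exp_le_exp.2
        nlinarith
      have hb : (0:ℝ) ≤ t ^ ((a.re + 1) - 1) := Real.rpow_nonneg ht0.le _
      exact mul_le_mul_of_nonneg_left this hb
    · exact realIntAux (by linarith) hε0
    · filter_upwards [ae_restrict_mem measurableSet_Ioi] with t ht x hx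
      have : HasDerivAt (fun y : ℂ => -(y * (t:ℂ))) (-(t:ℂ)) x := by
        simpa using ((hasDerivAt_id x).mul_const (t:ℂ)).fun_neg
      exact (this.cexp).const_mul _
  have hGd : DifferentiableOn ℂ G U := by
    intro z hz
    have hz' : 0 < z.re := hz
    exact ((differentiableAt_id.cpow (differentiableAt_const _)
      (Or.inl hz')).const_mul _).differentiableWithinAt
  have hFa : AnalyticOnNhd ℂ F U := hFd.analyticOnNhd hUopen
  have hGa : AnalyticOnNhd ℂ G U := hGd.analyticOnNhd hUopen
  have h1U : (1 : ℂ) ∈ U := by simp [hU]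
  have hreal : ∀ r : ℝ, 0 < r → F (r : ℂ) = G (r : ℂ) := by
    intro r hr
    have := Complex.integral_cpow_mul_exp_neg_mul_Ioi ha hr
    simp only [F, G]
    rw [this, mul_comm]
    congr 1
    rw [one_div, Complex.cpow_neg, Complex.inv_cpow]
    rw [Complex.arg_ofReal_of_nonneg hr.le]
    exact Real.pi_ne_zero.symm
  have hfreq : ∃ᶠ z in nhdsWithin (1:ℂ) {(1:ℂ)}ᶜ, F z = G z := by
    have htend : Tendsto (fun m : ℕ => ((1 + (m+1:ℝ)⁻¹ : ℝ) : ℂ)) atTop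
        (nhdsWithin (1:ℂ) {(1:ℂ)}ᶜ) := by
      apply tendsto_nhdsWithin_of_tendsto_nhds_of_eventually_within
      · have h1 : Tendsto (fun m : ℕ => (1 + (m+1:ℝ)⁻¹ : ℝ)) atTop (nhds 1) := by
          have h := tendsto_one_div_add_atTop_nhds_zero_nat (𝕜 := ℝ)
          have h2 := (tendsto_const_nhds (x := (1:ℝ)) (f := (atTop : Filter ℕ))).add h
          simpa [one_div] using h2
        exact ((Complex.continuous_ofReal.tendsto 1).comp h1).congr (by simp)
      · filter_upwards with m
        simp only [Set.mem_compl_iff, Set.mem_singleton_iff]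
        intro h
        have : (1 + (m+1:ℝ)⁻¹ : ℝ) = 1 := by exact_mod_cast h
        have : ((m:ℝ)+1)⁻¹ = 0 := by linarith
        simp at this
        linarith [this]
    apply htend.frequently
    apply Filter.Frequently.of_forall
    intro m
    exact hreal _ (by positivity)
  have := hFa.eqOn_of_preconnected_of_frequently_eq hGa hUconn h1U hfreq
  exact this hk

/-- The Riemann–Liouville fractional derivative (order `α`, `Re α ≥ 0`, constant of
differintegration `−∞`) of the exponential `e^{kt}` (with `Re k > 0`): with
`n = ⌊Re α⌋ + 1`, the fractional integral `g` of order `n − α` is `n` times complex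
differentiable on `ℂ` and its `n`-th derivative is `k^α e^{kt}` (principal branch). -/
theorem lerch_stmt4 (α k : ℂ) (hα : 0 ≤ α.re) (hk : 0 < k.re)
    (n : ℕ) (hn : (n : ℤ) = ⌊α.re⌋ + 1) :
    ContDiff ℂ n (fun t : ℂ => (1 / Complex.Gamma ((n : ℂ) - α)) *
        ∫ r in Set.Ioi (0:ℝ), (r : ℂ) ^ ((n : ℂ) - α - 1) * Complex.exp (k * (t - r))) ∧
    ∀ t : ℂ,
      iteratedDeriv n (fun t : ℂ => (1 / Complex.Gamma ((n : ℂ) - α)) *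
          ∫ r in Set.Ioi (0:ℝ), (r : ℂ) ^ ((n : ℂ) - α - 1) * Complex.exp (k * (t - r))) t =
        k ^ α * Complex.exp (k * t) := by
  have hkne : k ≠ 0 := fun h => by simp [h] at hk
  have hare : 0 < ((n:ℂ) - α).re := by
    have h1 : α.re < ((⌊α.re⌋ : ℝ) + 1) := Int.lt_floor_add_one _
    have h2 : ((⌊α.re⌋ : ℝ) + 1) = (n:ℝ) := by exact_mod_cast congrArg (Int.cast : ℤ → ℝ) hn.symm
    simp only [Complex.sub_re, Complex.natCast_re, sub_pos]
    linarith
  have hΓ : Complex.Gamma ((n:ℂ) - α) ≠ 0 := Complex.Gamma_ne_zero_of_re_pos hare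
  have hg : (fun t : ℂ => (1 / Complex.Gamma ((n : ℂ) - α)) *
        ∫ r in Set.Ioi (0:ℝ), (r : ℂ) ^ ((n : ℂ) - α - 1) * Complex.exp (k * (t - r))) =
      fun t : ℂ => k ^ (α - (n:ℂ)) * Complex.exp (k * t) := by
    funext t
    have h1 : ∀ r : ℝ, (r:ℂ) ^ ((n:ℂ) - α - 1) * Complex.exp (k * (t - r)) =
        Complex.exp (k * t) * ((r:ℂ) ^ ((n:ℂ) - α - 1) * Complex.exp (-(k * r))) := by
      intro r
      rw [mul_sub, Complex.exp_sub, Complex.exp_neg]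
      ring
    simp_rw [h1]
    rw [integral_const_mul, keyIntegral _ hare hk,
      show -((n:ℂ) - α) = α - n by ring]
    field_simp
  have hcd : ContDiff ℂ n (fun s : ℂ => Complex.exp (k * s)) :=
    (Complex.contDiff_exp.comp (contDiff_const.mul contDiff_id)).of_le le_top
  constructor
  · rw [hg]
    exact contDiff_const.mul hcd
  · intro t
    rw [hg]
    have h2 := iteratedDerivWithin_const_mul (Set.mem_univ t) uniqueDiffOn_univ
      (k ^ (α - (n:ℂ))) (hcd.contDiffOn (s := Set.univ) t (Set.mem_univ t))
    simp only [iteratedDerivWithin_univ] at h2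
    rw [h2, iteratedDeriv_cexp_const_mul n k]
    have hpow : k ^ (α - (n:ℂ)) * (k:ℂ) ^ (n:ℕ) = k ^ α := by
      rw [← Complex.cpow_natCast k n, ← Complex.cpow_add _ _ hkne]
      ring_nf
    rw [← hpow]
    ring
end

section
/- Let α ∈ ℂ with Re(α) < 0, let δ > 0 be real, let c ∈ ℂ and R > 0, and let f_n : ℂ → ℂ (n ≥ 0) be continuous functions. Let Ω = {t − r : t ∈ ℂ, |t − c| ≤ R, r ∈ [0, ∞)}. Assume: (i) there is d > 0 with |u| ≥ d for all u ∈ Ω; (ii) the series ∑_{n=0}^∞ f_n converges uniformly on the closed disc {t : |t − c| ≤ R}; (iii) sup_{u ∈ Ω} ( |u|^{δ − Re(α)} · |∑_{n=N+1}^∞ f_n(u)| ) → 0 as N → ∞ (in particular the series converges pointwise on Ω, with sum f); (iv) for each n and each t with |t − c| ≤ R, the function r ↦ r^{−Re(α)−1} · |f_n(t − r)| is integrable on (0, ∞). Then for each t with |t − c| ≤ R the function r ↦ r^{−α−1} · f(t − r) is integrable on (0, ∞), the series ∑_{n=0}^∞ (1/Γ(−α)) ∫_0^∞ r^{−α−1}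 f_n(t − r) dr converges uniformly in t on the closed disc {t : |t − c| ≤ R}, and its sum equals (1/Γ(−α)) ∫_0^∞ r^{−α−1} f(t − r) dr. -/
open Complex MeasureTheory Filter Set

/-- Term-by-term Riemann–Liouville fractional integration (order `α`, `Re α < 0`,
constant of differintegration `−∞`) of a uniformly convergent series: under the decay
hypothesis on the tails over the region `Ω` swept by the leftward horizontal rays from
the disc `|t − c| ≤ R`, the fractional integral of the sum `F` exists, the series of
fractional integrals converges uniformly on the disc, and its sum is the fractional
integral of `F`. -/
theorem lerch_stmt5 (α : ℂ) (hα : α.re < 0) (δ : ℝ) (hδ : 0 < δ)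
    (c : ℂ) (R : ℝ) (hR : 0 < R)
    (f : ℕ → ℂ → ℂ) (hf : ∀ n, Continuous (f n)) (F : ℂ → ℂ)
    (Ω : Set ℂ)
    (hΩ : Ω = {z : ℂ | ∃ t : ℂ, ∃ r : ℝ, ‖t - c‖ ≤ R ∧ 0 ≤ r ∧ z = t - r})
    (hd : ∃ d > 0, ∀ u ∈ Ω, d ≤ ‖u‖)
    (hunif : TendstoUniformlyOn (fun N t => ∑ n ∈ Finset.range N, f n t) F atTop
      {t : ℂ | ‖t - c‖ ≤ R})
    (hptwise : ∀ u ∈ Ω, Tendsto (fun N => ∑ n ∈ Finset.range N, f n u) atTop (nhds (F u)))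
    (htail : ∀ ε > 0, ∃ N₀ : ℕ, ∀ N ≥ N₀, ∀ u ∈ Ω,
      ‖u‖ ^ (δ - α.re) * ‖F u - ∑ n ∈ Finset.range N, f n u‖ ≤ ε)
    (hint : ∀ n : ℕ, ∀ t : ℂ, ‖t - c‖ ≤ R →
      IntegrableOn (fun r : ℝ => r ^ (-α.re - 1) * ‖f n (t - r)‖) (Set.Ioi 0)) :
    (∀ t : ℂ, ‖t - c‖ ≤ R →
      IntegrableOn (fun r : ℝ => (r : ℂ) ^ (-α - 1) * F (t - r)) (Set.Ioi 0)) ∧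
    TendstoUniformlyOn
      (fun N t => ∑ n ∈ Finset.range N,
        (1 / Complex.Gamma (-α)) * ∫ r in Set.Ioi (0:ℝ), (r : ℂ) ^ (-α - 1) * f n (t - r))
      (fun t => (1 / Complex.Gamma (-α)) *
        ∫ r in Set.Ioi (0:ℝ), (r : ℂ) ^ (-α - 1) * F (t - r))
      atTop {t : ℂ | ‖t - c‖ ≤ R} := by
  obtain ⟨d, hd0, hdΩ⟩ := hd
  set M : ℝ := ‖c‖ + R with hM
  have hM0 : 0 < M := by
    have := norm_nonneg c; simp only [hM]; linarith
  set e : ℝ := α.re - δ with hedef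
  have he : e < 0 := by simp only [hedef]; linarith
  -- membership in Ω
  have hmem : ∀ t : ℂ, ‖t - c‖ ≤ R → ∀ r : ℝ, 0 ≤ r → (t - (r:ℂ)) ∈ Ω := by
    intro t ht r hr; rw [hΩ]; exact ⟨t, r, ht, hr, rfl⟩
  -- lower bound for |t - r|
  have habs : ∀ t : ℂ, ‖t - c‖ ≤ R → ∀ r : ℝ, 0 ≤ r →
      max d (r - M) ≤ ‖t - (r:ℝ)‖ := by
    intro t ht r hr
    refine max_le (hdΩ _ (hmem t ht r hr)) ?_
    have h1 : ‖t‖ ≤ M := by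
      have h2 : ‖t‖ = ‖(t - c) + c‖ := by ring_nf
      have h3 := norm_add_le (t - c) c
      rw [h2]; simp only [hM]; linarith
    have h4 : ‖(r:ℂ)‖ - ‖t‖ ≤ ‖(r:ℂ) - t‖ :=
      norm_sub_norm_le _ _
    have h5 : ‖(r:ℂ) - t‖ = ‖t - (r:ℂ)‖ := by
      rw [← norm_neg]; ring_nf
    have h6 : ‖(r:ℂ)‖ = r := by
      rw [Complex.norm_real, Real.norm_eq_abs, _root_.abs_of_nonneg hr]
    linarith [h4, h5, h6, h1]
  -- the dominating function
  set g : ℝ → ℝ := fun r => r ^ (-α.re - 1) * max d (r - M) ^ e with hgdef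
  have hg_nonneg : ∀ r ∈ Ioi (0:ℝ), 0 ≤ g r := by
    intro r hr
    exact mul_nonneg (Real.rpow_nonneg (le_of_lt hr) _)
      (Real.rpow_nonneg (le_trans hd0.le (le_max_left _ _)) _)
  have hg_cont : ContinuousOn g (Ioi 0) := by
    have h1 : ContinuousOn (fun r : ℝ => r ^ (-α.re - 1)) (Ioi 0) := fun x hx =>
      (Real.continuousAt_rpow_const x _ (Or.inl (ne_of_gt hx))).continuousWithinAt
    have h2 : ContinuousOn (fun r : ℝ => max d (r - M) ^ e) (Ioi 0) := fun x hx =>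
      (((continuous_const.max (continuous_id.sub continuous_const)).continuousAt).rpow_const
        (Or.inl (ne_of_gt (lt_of_lt_of_le hd0 (le_max_left _ _))))).continuousWithinAt
    exact h1.mul h2
  have hg_int : IntegrableOn g (Ioi 0) := by
    have hT : (0:ℝ) < 2*M + 2*d := by linarith
    have hsplit : Ioi (0:ℝ) = Ioc 0 (2*M + 2*d) ∪ Ioi (2*M + 2*d) :=
      (Ioc_union_Ioi_eq_Ioi hT.le).symm
    rw [hsplit]
    apply IntegrableOn.union
    · -- near zero
      have hbase : IntegrableOn (fun r : ℝ => r ^ (-α.re - 1)) (Ioc 0 (2*M+2*d)) := by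
        rw [← intervalIntegrable_iff_integrableOn_Ioc_of_le hT.le]
        exact intervalIntegral.intervalIntegrable_rpow' (by linarith)
      refine Integrable.mono' (hbase.const_mul (d ^ e))
        ((hg_cont.mono Ioc_subset_Ioi_self).aestronglyMeasurable measurableSet_Ioc) ?_
      rw [ae_restrict_iff' measurableSet_Ioc]
      refine ae_of_all _ fun r hr => ?_
      rw [Real.norm_eq_abs, _root_.abs_of_nonneg (hg_nonneg r hr.1)]
      have h1 : max d (r - M) ^ e ≤ d ^ e :=
        Real.rpow_le_rpow_of_nonpos hd0 (le_max_left _ _) he.le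
      have h2 : (0:ℝ) ≤ r ^ (-α.re - 1) := Real.rpow_nonneg hr.1.le _
      calc g r = r ^ (-α.re - 1) * max d (r - M) ^ e := rfl
        _ ≤ r ^ (-α.re - 1) * d ^ e := mul_le_mul_of_nonneg_left h1 h2
        _ = d ^ e * r ^ (-α.re - 1) := by ring
    · -- near infinity
      have hbase : IntegrableOn (fun r : ℝ => (2:ℝ) ^ (-e) * r ^ (-δ - 1)) (Ioi (2*M+2*d)) :=
        (integrableOn_Ioi_rpow_of_lt (by linarith) hT).const_mul _
      refine Integrable.mono' hbase
        ((hg_cont.mono fun x hx => lt_trans hT hx).aestronglyMeasurable measurableSet_Ioi) ?_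
      rw [ae_restrict_iff' measurableSet_Ioi]
      refine ae_of_all _ fun r hr => ?_
      simp only [mem_Ioi] at hr
      have hr0 : (0:ℝ) < r := lt_trans hT hr
      rw [Real.norm_eq_abs, _root_.abs_of_nonneg (hg_nonneg r hr0)]
      have hmax : max d (r - M) = r - M := by
        apply max_eq_right; linarith
      have hhalf : r / 2 ≤ r - M := by linarith
      have h1 : (r - M) ^ e ≤ (r / 2) ^ e :=
        Real.rpow_le_rpow_of_nonpos (by linarith) hhalf he.le
      have h2 : (r / 2 : ℝ) ^ e = r ^ e * (2:ℝ) ^ (-e) := by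
        rw [Real.div_rpow hr0.le (by norm_num : (0:ℝ) ≤ 2), Real.rpow_neg (by norm_num)]
        ring
      have h3 : r ^ (-α.re - 1) * r ^ e = r ^ (-δ - 1) := by
        rw [← Real.rpow_add hr0]; congr 1; simp only [hedef]; ring
      calc g r = r ^ (-α.re - 1) * (r - M) ^ e := by rw [hgdef]; simp only [hmax]
        _ ≤ r ^ (-α.re - 1) * (r / 2) ^ e := by
            exact mul_le_mul_of_nonneg_left h1 (Real.rpow_nonneg hr0.le _)
        _ = (2:ℝ) ^ (-e) * (r ^ (-α.re - 1) * r ^ e) := by rw [h2]; ring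
        _ = (2:ℝ) ^ (-e) * r ^ (-δ - 1) := by rw [h3]
  set C : ℝ := ∫ r in Ioi (0:ℝ), g r with hCdef
  have hC0 : 0 ≤ C := setIntegral_nonneg measurableSet_Ioi hg_nonneg
  -- measurability of the cpow kernel
  have hker : AEStronglyMeasurable (fun r : ℝ => (r:ℂ) ^ (-α - 1))
      (volume.restrict (Ioi 0)) := by
    apply ContinuousOn.aestronglyMeasurable _ measurableSet_Ioi
    intro x hx
    exact (continuousAt_ofReal_cpow_const x _ (Or.inr (ne_of_gt hx))).continuousWithinAt
  -- kernel norm identity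
  have hkernorm : ∀ r : ℝ, 0 < r → ‖(r:ℂ) ^ (-α - 1)‖ = r ^ (-α.re - 1) := by
    intro r hr
    rw [Complex.norm_cpow_eq_rpow_re_of_pos hr]
    congr 1
  -- integrability of each term
  have hterm : ∀ t : ℂ, ‖t - c‖ ≤ R → ∀ n : ℕ,
      IntegrableOn (fun r : ℝ => (r:ℂ) ^ (-α - 1) * f n (t - r)) (Ioi 0) := by
    intro t ht n
    have hcont : Continuous fun r : ℝ => f n (t - ↑r) :=
      (hf n).comp (continuous_const.sub Complex.continuous_ofReal)
    have hmeas : AEStronglyMeasurable (fun r : ℝ => (r:ℂ) ^ (-α - 1) * f n (t - r))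
        (volume.restrict (Ioi 0)) := hker.mul hcont.aestronglyMeasurable
    rw [IntegrableOn, ← integrable_norm_iff hmeas]
    refine (hint n t ht).congr_fun ?_ measurableSet_Ioi
    intro r hr
    simp only [mem_Ioi] at hr
    show r ^ (-α.re - 1) * ‖f n (t - r)‖ = ‖(r:ℂ) ^ (-α - 1) * f n (t - r)‖
    rw [norm_mul, hkernorm r hr]
  -- measurability of F along the rays
  have hFmeas : ∀ t : ℂ, ‖t - c‖ ≤ R →
      AEStronglyMeasurable (fun r : ℝ => F (t - r)) (volume.restrict (Ioi 0)) := by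
    intro t ht
    apply aestronglyMeasurable_of_tendsto_ae atTop
      (f := fun N (r : ℝ) => ∑ n ∈ Finset.range N, f n (t - r))
    · intro N
      exact (continuous_finset_sum _ fun n _ =>
        (hf n).comp (continuous_const.sub Complex.continuous_ofReal)).aestronglyMeasurable
    · rw [ae_restrict_iff' measurableSet_Ioi]
      exact ae_of_all _ fun r hr => hptwise _ (hmem t ht r (le_of_lt hr))
  -- partial sums measurable
  have hSmeas : ∀ (N : ℕ) (t : ℂ), AEStronglyMeasurable
      (fun r : ℝ => ∑ n ∈ Finset.range N, f n (t - r)) (volume.restrict (Ioi 0)) := by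
    intro N t
    exact (continuous_finset_sum _ fun n _ =>
      (hf n).comp (continuous_const.sub Complex.continuous_ofReal)).aestronglyMeasurable
  -- the tail estimate machine
  have hTail : ∀ ε' > 0, ∃ N₀ : ℕ, ∀ N ≥ N₀, ∀ t : ℂ, ‖t - c‖ ≤ R →
      IntegrableOn (fun r : ℝ => (r:ℂ) ^ (-α - 1) *
        (F (t - r) - ∑ n ∈ Finset.range N, f n (t - r))) (Ioi 0) ∧
      ‖∫ r in Ioi (0:ℝ), (r:ℂ) ^ (-α - 1) *
        (F (t - r) - ∑ n ∈ Finset.range N, f n (t - r))‖ ≤ ε' * C := by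
    intro ε' hε'
    obtain ⟨N₀, hN₀⟩ := htail ε' hε'
    refine ⟨N₀, fun N hN t ht => ?_⟩
    have hbound : ∀ r ∈ Ioi (0:ℝ),
        ‖(r:ℂ) ^ (-α - 1) * (F (t - r) - ∑ n ∈ Finset.range N, f n (t - r))‖ ≤ ε' * g r := by
      intro r hr
      simp only [mem_Ioi] at hr
      set u : ℂ := t - r with hu
      have huΩ : u ∈ Ω := hmem t ht r hr.le
      have hud : d ≤ ‖u‖ := hdΩ _ huΩ
      have hupos : 0 < ‖u‖ := lt_of_lt_of_le hd0 hud
      have h1 := hN₀ N hN u huΩ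
      have h2 : ‖F u - ∑ n ∈ Finset.range N, f n u‖ ≤
          ε' * ‖u‖ ^ e := by
        have h3 : (0:ℝ) < ‖u‖ ^ (δ - α.re) := Real.rpow_pos_of_pos hupos _
        have h4 : ‖u‖ ^ e = (‖u‖ ^ (δ - α.re))⁻¹ := by
          rw [← Real.rpow_neg hupos.le]; congr 1; simp only [hedef]; ring
        rw [h4, ← div_eq_mul_inv, le_div_iff₀ h3, mul_comm]
        exact h1
      have h5 : ‖u‖ ^ e ≤ max d (r - M) ^ e :=
        Real.rpow_le_rpow_of_nonpos (lt_of_lt_of_le hd0 (le_max_left _ _))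
          (habs t ht r hr.le) he.le
      rw [norm_mul, hkernorm r hr]
      calc r ^ (-α.re - 1) * ‖F u - ∑ n ∈ Finset.range N, f n u‖
          ≤ r ^ (-α.re - 1) * (ε' * max d (r - M) ^ e) := by
            apply mul_le_mul_of_nonneg_left _ (Real.rpow_nonneg hr.le _)
            exact le_trans h2 (mul_le_mul_of_nonneg_left h5 hε'.le)
        _ = ε' * g r := by rw [hgdef]; ring
    have hmeas : AEStronglyMeasurable (fun r : ℝ => (r:ℂ) ^ (-α - 1) *
        (F (t - r) - ∑ n ∈ Finset.range N, f n (t - r))) (volume.restrict (Ioi 0)) :=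
      hker.mul ((hFmeas t ht).sub (hSmeas N t))
    have hbound' : ∀ᵐ r : ℝ ∂(volume.restrict (Ioi (0:ℝ))),
        ‖(r:ℂ) ^ (-α - 1) * (F (t - r) - ∑ n ∈ Finset.range N, f n (t - r))‖
          ≤ ε' * g r := by
      rw [ae_restrict_iff' measurableSet_Ioi]
      exact ae_of_all _ hbound
    have hint' : IntegrableOn (fun r : ℝ => ε' * g r) (Ioi 0) := hg_int.const_mul _
    refine ⟨Integrable.mono' hint' hmeas hbound', ?_⟩
    calc ‖∫ r in Ioi (0:ℝ), (r:ℂ) ^ (-α - 1) *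
          (F (t - r) - ∑ n ∈ Finset.range N, f n (t - r))‖
        ≤ ∫ r in Ioi (0:ℝ), ε' * g r := norm_integral_le_of_norm_le hint' hbound'
      _ = ε' * C := by rw [hCdef, integral_const_mul]
  -- Part 1: integrability of the F-integrand
  have hFint : ∀ t : ℂ, ‖t - c‖ ≤ R →
      IntegrableOn (fun r : ℝ => (r:ℂ) ^ (-α - 1) * F (t - r)) (Ioi 0) := by
    intro t ht
    obtain ⟨N₀, hN₀⟩ := hTail 1 one_pos
    have h1 := (hN₀ N₀ le_rfl t ht).1
    have h2 : IntegrableOn (fun r : ℝ => ∑ n ∈ Finset.range N₀,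
        (r:ℂ) ^ (-α - 1) * f n (t - r)) (Ioi 0) :=
      integrable_finset_sum _ fun n _ => hterm t ht n
    refine (h1.add h2).congr (ae_of_all _ fun r => ?_)
    simp only [Pi.add_apply, ← Finset.mul_sum]
    ring
  refine ⟨hFint, ?_⟩
  -- Part 2: uniform convergence
  rw [Metric.tendstoUniformlyOn_iff]
  intro ε hε
  set K : ℝ := ‖1 / Complex.Gamma (-α)‖ * C with hKdef
  have hK0 : 0 ≤ K := mul_nonneg (norm_nonneg _) hC0
  set ε' : ℝ := ε / (K + 1) with hε'def
  have hε'0 : 0 < ε' := div_pos hε (by linarith)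
  obtain ⟨N₀, hN₀⟩ := hTail ε' hε'0
  filter_upwards [eventually_ge_atTop N₀] with N hN
  intro t ht'
  have ht : ‖t - c‖ ≤ R := ht'
  obtain ⟨htlint, htlbd⟩ := hN₀ N hN t ht
  have hSint : IntegrableOn (fun r : ℝ => ∑ n ∈ Finset.range N,
      (r:ℂ) ^ (-α - 1) * f n (t - r)) (Ioi 0) :=
    integrable_finset_sum _ fun n _ => hterm t ht n
  have hsum : ∑ n ∈ Finset.range N,
      (1 / Complex.Gamma (-α)) * ∫ r in Ioi (0:ℝ), (r:ℂ) ^ (-α - 1) * f n (t - r)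
      = (1 / Complex.Gamma (-α)) * ∫ r in Ioi (0:ℝ),
          ∑ n ∈ Finset.range N, (r:ℂ) ^ (-α - 1) * f n (t - r) := by
    rw [← Finset.mul_sum, ← integral_finset_sum _ (fun n _ => hterm t ht n)]
  have hdiff : (∫ r in Ioi (0:ℝ), (r:ℂ) ^ (-α - 1) * F (t - r))
      - ∫ r in Ioi (0:ℝ), ∑ n ∈ Finset.range N, (r:ℂ) ^ (-α - 1) * f n (t - r)
      = ∫ r in Ioi (0:ℝ), (r:ℂ) ^ (-α - 1) *
          (F (t - r) - ∑ n ∈ Finset.range N, f n (t - r)) := by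
    rw [← integral_sub (hFint t ht) hSint]
    refine integral_congr_ae (ae_of_all _ fun r => ?_)
    simp only [← Finset.mul_sum]
    ring
  rw [dist_eq_norm, hsum, ← mul_sub, hdiff, norm_mul]
  calc ‖1 / Complex.Gamma (-α)‖ * ‖∫ r in Ioi (0:ℝ), (r:ℂ) ^ (-α - 1) *
        (F (t - r) - ∑ n ∈ Finset.range N, f n (t - r))‖
      ≤ ‖1 / Complex.Gamma (-α)‖ * (ε' * C) :=
        mul_le_mul_of_nonneg_left htlbd (norm_nonneg _)
    _ = ε' * K := by rw [hKdef]; ring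
    _ < ε' * (K + 1) := by
        exact mul_lt_mul_of_pos_left (by linarith) hε'0
    _ = ε := by
        rw [hε'def]; field_simp
end

section
/- Let t, x, s ∈ ℂ with Im(t) > 0, Im(x) < 0, and Re(s) > 0. Then the series ∑_{n=0}^∞ (n+x)^{−s} · e^{2πitn} converges absolutely, the function r ↦ r^{s−1} · e^{2πi(t−r)x} / (1 − e^{2πi(t−r)}) is integrable on (0, ∞), and ∑_{n=0}^∞ (n+x)^{−s} · e^{2πitn} = (2π)^s · exp(iπ(s/2 − 2tx)) · (1/Γ(s)) · ∫_0^∞ r^{s−1} · e^{2πi(t−r)x} / (1 − e^{2πi(t−r)}) dr. -/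
open Complex Real MeasureTheory

section LerchAux

open Set Filter Metric

-- measurability helper
lemma lerch_meas (w s : ℂ) :
    AEStronglyMeasurable (fun r : ℝ => (r : ℂ) ^ (s - 1) * Complex.exp (-(w * r)))
      (volume.restrict (Set.Ioi 0)) := by
  apply ContinuousOn.aestronglyMeasurable _ measurableSet_Ioi
  apply ContinuousOn.mul
  · intro r hr
    apply ContinuousAt.continuousWithinAt
    exact ContinuousAt.comp (continuousAt_cpow_const
      (Or.inl (by exact_mod_cast hr : (0:ℝ) < (r:ℂ).re))) Complex.continuous_ofReal.continuousAt
  · exact (Complex.continuous_exp.comp (by continuity)).continuousOn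

-- norm of the integrand
lemma lerch_norm {r : ℝ} (hr : 0 < r) (w s : ℂ) :
    ‖(r : ℂ) ^ (s - 1) * Complex.exp (-(w * r))‖
      = r ^ (s.re - 1) * Real.exp (-(w.re * r)) := by
  rw [norm_mul,
    Complex.norm_cpow_eq_rpow_re_of_pos hr, Complex.norm_exp]
  congr 2
  simp [Complex.sub_re]

-- integrability of t^(s-1) exp(-a t) for complex a with positive real part
lemma lerch_integrable {a s : ℂ} (ha : 0 < a.re) (hs : 0 < s.re) :
    IntegrableOn (fun r : ℝ => (r : ℂ) ^ (s - 1) * Complex.exp (-(a * r))) (Set.Ioi 0) := by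
  have h0 : IntegrableOn (fun r : ℝ => Real.exp (-r) * r ^ (s.re - 1)) (Set.Ioi 0) :=
    Real.GammaIntegral_convergent hs
  have h1 : IntegrableOn (fun r : ℝ => Real.exp (-(a.re * r)) * (a.re * r) ^ (s.re - 1))
      (Set.Ioi 0) := by
    have := (integrableOn_Ioi_comp_mul_left_iff
      (fun r : ℝ => Real.exp (-r) * r ^ (s.re - 1)) 0 ha).mpr
    simpa using this (by simpa using h0)
  refine Integrable.mono' (h1.const_mul (a.re ^ (1 - s.re))) (lerch_meas a s) ?_
  filter_upwards [ae_restrict_mem measurableSet_Ioi] with r hr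
  rw [lerch_norm hr]
  rw [Real.mul_rpow ha.le (le_of_lt hr)]
  rw [show a.re ^ (1 - s.re) * (Real.exp (-(a.re * r)) * (a.re ^ (s.re - 1) * r ^ (s.re - 1)))
      = (a.re ^ (1 - s.re) * a.re ^ (s.re - 1)) * (r ^ (s.re - 1) * Real.exp (-(a.re * r)))
      by ring]
  rw [← Real.rpow_add ha, show (1 - s.re) + (s.re - 1) = 0 by ring, Real.rpow_zero, one_mul]

-- differentiability of the parametric integral
lemma lerch_diff {s : ℂ} (hs : 0 < s.re) :
    DifferentiableOn ℂ
      (fun a : ℂ => ∫ r in Set.Ioi (0:ℝ), (r : ℂ) ^ (s - 1) * Complex.exp (-(a * r)))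
      {z : ℂ | 0 < z.re} := by
  intro a₀ ha₀
  simp only [Set.mem_setOf_eq] at ha₀
  set ε : ℝ := a₀.re / 2 with hε
  have hε0 : 0 < ε := by positivity
  have key := hasDerivAt_integral_of_dominated_loc_of_deriv_le (μ := volume.restrict (Ioi 0))
    (F := fun (w : ℂ) (r : ℝ) => (r : ℂ) ^ (s - 1) * Complex.exp (-(w * r)))
    (F' := fun (w : ℂ) (r : ℝ) => (r : ℂ) ^ (s - 1) * (Complex.exp (-(w * r)) * (-(r:ℂ))))
    (x₀ := a₀)
    (bound := fun r : ℝ => ‖(r : ℂ) ^ ((s+1) - 1) * Complex.exp (-((ε:ℂ) * r))‖)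
    (Metric.ball_mem_nhds a₀ hε0)
    (Eventually.of_forall fun w => lerch_meas w s)
    (lerch_integrable (by simpa using ha₀) hs)
    ?_ ?_ ?_ ?_
  · exact (key.2.differentiableAt).differentiableWithinAt
  · -- measurability of F' a₀
    have := (lerch_meas a₀ (s+1)).mul
      (aestronglyMeasurable_const (b := (-1 : ℂ)))
    apply AEStronglyMeasurable.congr this
    filter_upwards [ae_restrict_mem measurableSet_Ioi] with r hr
    have hr0 : (r:ℂ) ≠ 0 := by exact_mod_cast (ne_of_gt hr)
    simp only [Pi.mul_apply]
    rw [show (s+1) - 1 = (s-1) + 1 by ring, Complex.cpow_add _ _ hr0, Complex.cpow_one]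
    ring
  · -- bound
    filter_upwards [ae_restrict_mem measurableSet_Ioi] with r hr
    intro w hw
    simp only [Set.mem_Ioi] at hr
    have hre : (-(w * (r:ℂ))).re = -(w.re * r) := by simp [Complex.mul_re]
    have h1 : ‖-(r:ℂ)‖ = r := by
      rw [norm_neg]; simpa using abs_of_pos hr
    rw [norm_mul, lerch_norm hr (ε:ℂ) (s+1), norm_mul,
      Complex.norm_cpow_eq_rpow_re_of_pos hr,
      Complex.norm_exp, hre, h1]
    simp only [Complex.sub_re, Complex.one_re, Complex.add_re, Complex.ofReal_re]
    rw [show s.re + 1 - 1 = (s.re - 1) + 1 by ring, Real.rpow_add hr, Real.rpow_one]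
    have hwre : ε ≤ w.re := by
      have h4 : |w.re - a₀.re| ≤ ‖w - a₀‖ := by
        simpa using Complex.abs_re_le_norm (w - a₀)
      have h2 : ‖w - a₀‖ < ε := by simpa [Metric.mem_ball, dist_eq_norm] using hw
      have := (abs_lt.mp (lt_of_le_of_lt h4 h2)).1
      simp only [hε] at *; linarith
    have hE : Real.exp (-(w.re * r)) ≤ Real.exp (-(ε * r)) := by
      apply Real.exp_le_exp.mpr
      nlinarith
    calc r ^ (s.re - 1) * (Real.exp (-(w.re * r)) * r)
        = (r ^ (s.re - 1) * r) * Real.exp (-(w.re * r)) := by ring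
      _ ≤ (r ^ (s.re - 1) * r) * Real.exp (-(ε * r)) :=
          mul_le_mul_of_nonneg_left hE (mul_nonneg (Real.rpow_nonneg hr.le _) hr.le)
  · -- integrability of bound
    exact (lerch_integrable (a := (ε:ℂ)) (by simpa using hε0)
      (by simp [Complex.add_re]; linarith)).norm
  · -- differentiability pointwise
    filter_upwards with r
    intro w hw
    have h1 : HasDerivAt (fun w : ℂ => -(w * (r:ℂ))) (-(r:ℂ)) w := by
      simpa [Pi.neg_def] using ((hasDerivAt_id w).mul_const (r:ℂ)).neg
    have h2 : HasDerivAt (fun w : ℂ => Complex.exp (-(w * (r:ℂ))))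
        (Complex.exp (-(w * (r:ℂ))) * (-(r:ℂ))) w := h1.cexp
    simpa using h2.const_mul ((r:ℂ) ^ (s - 1))

lemma lerch_gammaC {a s : ℂ} (ha : 0 < a.re) (hs : 0 < s.re) :
    ∫ r in Set.Ioi (0:ℝ), (r : ℂ) ^ (s - 1) * Complex.exp (-(a * r))
      = Complex.Gamma s * a ^ (-s) := by
  set U : Set ℂ := {z : ℂ | 0 < z.re} with hU
  have hUopen : IsOpen U := by
    exact isOpen_lt continuous_const Complex.continuous_re
  have hf : AnalyticOnNhd ℂ
      (fun a : ℂ => ∫ r in Set.Ioi (0:ℝ), (r : ℂ) ^ (s - 1) * Complex.exp (-(a * r))) U :=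
    (lerch_diff hs).analyticOnNhd hUopen
  have hg : AnalyticOnNhd ℂ (fun a : ℂ => Complex.Gamma s * a ^ (-s)) U := by
    apply DifferentiableOn.analyticOnNhd _ hUopen
    intro z hz
    apply DifferentiableWithinAt.const_mul
    exact ((differentiableAt_id.cpow (differentiableAt_const _)
      (Or.inl hz)).differentiableWithinAt)
  have hconn : IsPreconnected U := (convex_halfSpace_re_gt 0).isPreconnected
  have h1U : (1:ℂ) ∈ U := by simp [hU]
  -- equality for real points
  have hreal : ∀ b : ℝ, 0 < b →
      (∫ r in Set.Ioi (0:ℝ), (r : ℂ) ^ (s - 1) * Complex.exp (-((b:ℂ) * r)))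
        = Complex.Gamma s * (b:ℂ) ^ (-s) := by
    intro b hb
    have := Complex.integral_cpow_mul_exp_neg_mul_Ioi hs hb
    have harg : ((b:ℂ)).arg ≠ π := by
      rw [Complex.arg_ofReal_of_nonneg hb.le]
      exact fun h => Real.pi_ne_zero h.symm
    rw [show ((1:ℂ)/b) ^ s = (b:ℂ) ^ (-s) by
      rw [one_div, Complex.inv_cpow _ _ harg, ← Complex.cpow_neg]] at this
    rw [this]
    exact mul_comm _ _
  -- frequently equal near 1
  have hfreq : ∃ᶠ z in nhdsWithin (1:ℂ) {(1:ℂ)}ᶜ,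
      (∫ r in Set.Ioi (0:ℝ), (r : ℂ) ^ (s - 1) * Complex.exp (-(z * r)))
        = Complex.Gamma s * z ^ (-s) := by
    have htend : Tendsto (fun n : ℕ => ((1 + (n+1:ℝ)⁻¹ : ℝ) : ℂ)) atTop
        (nhdsWithin (1:ℂ) {(1:ℂ)}ᶜ) := by
      apply tendsto_nhdsWithin_of_tendsto_nhds_of_eventually_within
      · have h0 : Tendsto (fun n : ℕ => (1 + (n+1:ℝ)⁻¹ : ℝ)) atTop (nhds 1) := by
          have := tendsto_one_div_add_atTop_nhds_zero_nat (𝕜 := ℝ)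
          simp only [one_div] at this
          simpa using (tendsto_const_nhds (x := (1:ℝ))).add this
        have h1 := (Complex.continuous_ofReal.tendsto 1).comp h0
        have h2 : ((1:ℝ):ℂ) = 1 := by norm_num
        rw [← h2]
        exact h1
      · filter_upwards with n
        simp only [Set.mem_compl_iff, Set.mem_singleton_iff]
        intro h
        have : (1 + (n+1:ℝ)⁻¹ : ℝ) = 1 := by exact_mod_cast h
        have h2 : (0:ℝ) < (n+1:ℝ)⁻¹ := by positivity
        linarith
    apply htend.frequently
    apply Frequently.of_forall
    intro n
    exact hreal _ (by positivity)
  have := hf.eqOn_of_preconnected_of_frequently_eq hg hconn h1U hfreq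
  exact this ha

lemma lerch_cpow_split {z : ℂ} (hz : z.im < 0) (s : ℂ) :
    (2 * (π:ℂ) * I * z) ^ s = ((2 * π : ℝ):ℂ) ^ s * Complex.exp ((π:ℂ) * I * s / 2) * z ^ s := by
  have h2π : (0:ℝ) < 2 * π := by positivity
  have hz0 : z ≠ 0 := by
    intro h; rw [h] at hz; simp at hz
  have hc : (2 * (π:ℂ) * I) = ((2 * π : ℝ):ℂ) * I := by push_cast; ring
  have hc0 : (2 * (π:ℂ) * I) ≠ 0 := by
    rw [hc]
    exact mul_ne_zero (by exact_mod_cast h2π.ne') I_ne_zero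
  have hargc : (2 * (π:ℂ) * I).arg = π / 2 := by
    rw [hc, Complex.arg_real_mul _ h2π, Complex.arg_I]
  have hargz0 : z.arg < 0 := Complex.arg_neg_iff.mpr hz
  have hargz1 : -π < z.arg := Complex.neg_pi_lt_arg z
  have hlog : Complex.log (2 * (π:ℂ) * I * z)
      = Complex.log (2 * (π:ℂ) * I) + Complex.log z := by
    apply Complex.log_mul hc0 hz0
    rw [hargc]
    constructor
    · have := Real.pi_pos; linarith
    · have := Real.pi_pos; linarith
  have hlogc : Complex.log (2 * (π:ℂ) * I) = ((Real.log (2*π) : ℝ):ℂ) + ((π/2 : ℝ):ℂ) * I := by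
    apply Complex.ext
    · rw [Complex.log_re]
      simp [hc, Complex.norm_real, abs_of_pos h2π, abs_of_pos Real.pi_pos]
    · rw [Complex.log_im, hargc]
      simp
  rw [Complex.cpow_def_of_ne_zero (mul_ne_zero hc0 hz0), hlog, add_mul, Complex.exp_add,
    Complex.cpow_def_of_ne_zero hz0, hlogc, add_mul, Complex.exp_add,
    Complex.cpow_def_of_ne_zero (by exact_mod_cast h2π.ne' : ((2*π:ℝ):ℂ) ≠ 0),
    ← Complex.ofReal_log h2π.le]
  congr 2
  push_cast
  ring

-- the per-term algebraic identity
lemma lerch_term (t x s : ℂ) (hx : x.im < 0) (hs : 0 < s.re) (n : ℕ) :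
    ((2 * π : ℝ):ℂ) ^ s * Complex.exp ((π:ℂ) * I * (s / 2 - 2 * t * x)) *
      ((1 / Complex.Gamma s) *
        (Complex.exp (2 * (π:ℂ) * I * t * ((n:ℂ) + x)) *
          (Complex.Gamma s * (2 * (π:ℂ) * I * ((n:ℂ) + x)) ^ (-s))))
      = ((n:ℂ) + x) ^ (-s) * Complex.exp (2 * (π:ℂ) * I * t * n) := by
  have hzim : ((n:ℂ) + x).im < 0 := by simpa using hx
  have h2π0 : ((2 * π : ℝ):ℂ) ≠ 0 := by
    have : (0:ℝ) < 2 * π := by positivity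
    exact_mod_cast this.ne'
  have hΓ : Complex.Gamma s ≠ 0 := Complex.Gamma_ne_zero_of_re_pos hs
  have hWW : ((2 * π : ℝ):ℂ) ^ s * ((2 * π : ℝ):ℂ) ^ (-s) = 1 := by
    rw [← Complex.cpow_add _ _ h2π0]; simp
  have hE : Complex.exp ((π:ℂ) * I * (s / 2 - 2 * t * x)) *
      Complex.exp (2 * (π:ℂ) * I * t * ((n:ℂ) + x)) * Complex.exp ((π:ℂ) * I * (-s) / 2)
      = Complex.exp (2 * (π:ℂ) * I * t * n) := by
    rw [← Complex.exp_add, ← Complex.exp_add]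
    congr 1
    ring
  rw [lerch_cpow_split hzim (-s)]
  calc ((2 * π : ℝ):ℂ) ^ s * Complex.exp ((π:ℂ) * I * (s / 2 - 2 * t * x)) *
      ((1 / Complex.Gamma s) *
        (Complex.exp (2 * (π:ℂ) * I * t * ((n:ℂ) + x)) *
          (Complex.Gamma s * (((2 * π : ℝ):ℂ) ^ (-s) * Complex.exp ((π:ℂ) * I * (-s) / 2) *
            ((n:ℂ) + x) ^ (-s)))))
      = (((2 * π : ℝ):ℂ) ^ s * ((2 * π : ℝ):ℂ) ^ (-s)) * (Complex.Gamma s * (1 / Complex.Gamma s)) *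
          (Complex.exp ((π:ℂ) * I * (s / 2 - 2 * t * x)) *
            Complex.exp (2 * (π:ℂ) * I * t * ((n:ℂ) + x)) * Complex.exp ((π:ℂ) * I * (-s) / 2)) *
          ((n:ℂ) + x) ^ (-s) := by ring
    _ = ((n:ℂ) + x) ^ (-s) * Complex.exp (2 * (π:ℂ) * I * t * n) := by
        rw [hWW, mul_one_div_cancel hΓ, hE]; ring

lemma lerch_re (w : ℂ) : (2 * (π:ℂ) * I * w).re = -(2 * π * w.im) := by
  simp [Complex.mul_re, Complex.mul_im]

lemma lerch_abs_exp (w : ℂ) :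
    ‖Complex.exp (2 * (π:ℂ) * I * w)‖ = Real.exp (-(2 * π * w.im)) := by
  rw [Complex.norm_exp, lerch_re]

lemma lerch_split (t x s : ℂ) (n : ℕ) (r : ℝ) :
    (r:ℂ) ^ (s-1) * Complex.exp (2 * (π:ℂ) * I * (t - r) * ((n:ℂ) + x))
      = Complex.exp (2 * (π:ℂ) * I * t * ((n:ℂ) + x)) *
        ((r:ℂ) ^ (s-1) * Complex.exp (-((2 * (π:ℂ) * I * ((n:ℂ) + x)) * r))) := by
  have h : Complex.exp (2 * (π:ℂ) * I * (t - r) * ((n:ℂ) + x))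
      = Complex.exp (2 * (π:ℂ) * I * t * ((n:ℂ) + x)) *
        Complex.exp (-((2 * (π:ℂ) * I * ((n:ℂ) + x)) * r)) := by
    rw [← Complex.exp_add]; congr 1; ring
  rw [h]; ring

lemma lerch_a_re {x : ℂ} (hx : x.im < 0) (n : ℕ) :
    0 < (2 * (π:ℂ) * I * ((n:ℂ) + x)).re := by
  rw [lerch_re]
  have : ((n:ℂ) + x).im = x.im := by simp
  rw [this]
  nlinarith [Real.pi_pos]

lemma lerch_F_int {t x s : ℂ} (hx : x.im < 0) (hs : 0 < s.re) (n : ℕ) :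
    IntegrableOn (fun r : ℝ =>
      (r:ℂ) ^ (s-1) * Complex.exp (2 * (π:ℂ) * I * (t - r) * ((n:ℂ) + x))) (Set.Ioi 0) := by
  have := (lerch_integrable (lerch_a_re hx n) hs).const_mul
    (Complex.exp (2 * (π:ℂ) * I * t * ((n:ℂ) + x)))
  apply this.congr
  filter_upwards with r
  rw [lerch_split]

lemma lerch_F_integral {t x s : ℂ} (hx : x.im < 0) (hs : 0 < s.re) (n : ℕ) :
    ∫ r in Set.Ioi (0:ℝ),
        (r:ℂ) ^ (s-1) * Complex.exp (2 * (π:ℂ) * I * (t - r) * ((n:ℂ) + x))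
      = Complex.exp (2 * (π:ℂ) * I * t * ((n:ℂ) + x)) *
          (Complex.Gamma s * (2 * (π:ℂ) * I * ((n:ℂ) + x)) ^ (-s)) := by
  rw [← lerch_gammaC (lerch_a_re hx n) hs, ← MeasureTheory.integral_const_mul]
  apply setIntegral_congr_fun measurableSet_Ioi
  intro r _
  exact lerch_split t x s n r

lemma lerch_F_norm {t x s : ℂ} (n : ℕ) {r : ℝ} (hr : 0 < r) :
    ‖(r:ℂ) ^ (s-1) * Complex.exp (2 * (π:ℂ) * I * (t - r) * ((n:ℂ) + x))‖
      = Real.exp (-(2 * π * (t * ((n:ℂ) + x)).im)) *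
          (r ^ (s.re - 1) * Real.exp (-(-(2 * π * x.im) * r))) := by
  rw [lerch_split, norm_mul, lerch_norm hr]
  have h1 : ‖Complex.exp (2 * (π:ℂ) * I * t * ((n:ℂ) + x))‖
      = Real.exp (-(2 * π * (t * ((n:ℂ) + x)).im)) := by
    rw [show 2 * (π:ℂ) * I * t * ((n:ℂ) + x)
      = 2 * (π:ℂ) * I * (t * ((n:ℂ) + x)) by ring, lerch_abs_exp]
  have h2 : (2 * (π:ℂ) * I * ((n:ℂ) + x)).re = -(2 * π * x.im) := by
    rw [lerch_re]
    congr 2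
    simp
  rw [h1, h2]

lemma lerch_F_norm_integral {t x s : ℂ} (n : ℕ) :
    ∫ r in Set.Ioi (0:ℝ),
        ‖(r:ℂ) ^ (s-1) * Complex.exp (2 * (π:ℂ) * I * (t - r) * ((n:ℂ) + x))‖
      = Real.exp (-(2 * π * (t * ((n:ℂ) + x)).im)) *
          ∫ r in Set.Ioi (0:ℝ), r ^ (s.re - 1) * Real.exp (-(-(2 * π * x.im) * r)) := by
  rw [← MeasureTheory.integral_const_mul]
  apply setIntegral_congr_fun measurableSet_Ioi
  intro r hr
  exact lerch_F_norm n hr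

lemma lerch_K_eq (t x : ℂ) (n : ℕ) :
    Real.exp (-(2 * π * (t * ((n:ℂ) + x)).im))
      = Real.exp (-(2 * π * (t * x).im)) * (Real.exp (-(2 * π * t.im)))^n := by
  rw [← Real.exp_nat_mul, ← Real.exp_add]
  congr 1
  have : (t * ((n:ℂ) + x)).im = n * t.im + (t * x).im := by
    rw [show t * ((n:ℂ) + x) = (n:ℂ) * t + t * x by ring]
    simp [Complex.add_im, Complex.mul_im]
  rw [this]
  ring

lemma lerch_geo_sum {t x s : ℂ} (ht : 0 < t.im) (r : ℝ) :
    ∑' n : ℕ, (r:ℂ) ^ (s-1) * Complex.exp (2 * (π:ℂ) * I * (t - r) * ((n:ℂ) + x))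
      = (r:ℂ) ^ (s-1) * Complex.exp (2 * (π:ℂ) * I * (t - r) * x) /
          (1 - Complex.exp (2 * (π:ℂ) * I * (t - r))) := by
  have hlt : ‖Complex.exp (2 * (π:ℂ) * I * (t - r))‖ < 1 := by
    rw [lerch_abs_exp]
    have him : (t - (r:ℂ)).im = t.im := by simp
    rw [him, show (1:ℝ) = Real.exp 0 by simp]
    exact Real.exp_lt_exp.mpr (by nlinarith [Real.pi_pos])
  have hgeo := tsum_geometric_of_norm_lt_one hlt
  have hterm : ∀ n : ℕ,
      (r:ℂ) ^ (s-1) * Complex.exp (2 * (π:ℂ) * I * (t - r) * ((n:ℂ) + x))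
        = ((r:ℂ) ^ (s-1) * Complex.exp (2 * (π:ℂ) * I * (t - r) * x)) *
            (Complex.exp (2 * (π:ℂ) * I * (t - r)))^n := by
    intro n
    have h2 : Complex.exp (2 * (π:ℂ) * I * (t - r) * x) *
        (Complex.exp (2 * (π:ℂ) * I * (t - r)))^n
        = Complex.exp (2 * (π:ℂ) * I * (t - r) * ((n:ℂ) + x)) := by
      rw [← Complex.exp_nat_mul, ← Complex.exp_add]
      congr 1
      ring
    conv_rhs => rw [mul_assoc, h2]
  rw [tsum_congr hterm, tsum_mul_left, hgeo, div_eq_mul_inv]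

end LerchAux

open Set Filter in
/-- Main theorem (interior case): for `Im t > 0`, `Im x < 0`, `Re s > 0`, the Lerch zeta
series converges absolutely and equals
`(2π)^s e^{iπ(s/2 − 2tx)}` times the Riemann–Liouville fractional integral of order `−s`
(constant of differintegration `−∞`) of `u ↦ e^{2πiux}/(1 − e^{2πiu})` at `u = t`. -/
theorem lerch_stmt7 (t x s : ℂ) (ht : 0 < t.im) (hx : x.im < 0) (hs : 0 < s.re) :
    Summable (fun n : ℕ =>
      ‖((n : ℂ) + x) ^ (-s) * Complex.exp (2 * (π : ℂ) * I * t * n)‖) ∧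
    IntegrableOn (fun r : ℝ =>
      (r : ℂ) ^ (s - 1) * Complex.exp (2 * (π : ℂ) * I * (t - r) * x) /
        (1 - Complex.exp (2 * (π : ℂ) * I * (t - r)))) (Set.Ioi 0) ∧
    ∑' n : ℕ, ((n : ℂ) + x) ^ (-s) * Complex.exp (2 * (π : ℂ) * I * t * n) =
      ((2 * π : ℝ) : ℂ) ^ s * Complex.exp ((π : ℂ) * I * (s / 2 - 2 * t * x)) *
        ((1 / Complex.Gamma s) *
          ∫ r in Set.Ioi (0:ℝ),
            (r : ℂ) ^ (s - 1) * Complex.exp (2 * (π : ℂ) * I * (t - r) * x) /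
              (1 - Complex.exp (2 * (π : ℂ) * I * (t - r)))) := by
  have hπ := Real.pi_pos
  set q : ℝ := Real.exp (-(2 * π * t.im)) with hqdef
  have hq0 : 0 < q := Real.exp_pos _
  have hq1 : q < 1 := by
    rw [hqdef, show (1:ℝ) = Real.exp 0 by simp]
    exact Real.exp_lt_exp.mpr (by nlinarith)
  have hα0 : 0 < -(2 * π * x.im) := by nlinarith
  -- summability of the integrals of norms
  have hCα : ∀ n : ℕ, ∫ r in Set.Ioi (0:ℝ),
      ‖(r:ℂ) ^ (s-1) * Complex.exp (2 * (π:ℂ) * I * (t - r) * ((n:ℂ) + x))‖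
      = (Real.exp (-(2 * π * (t * x).im)) * q^n) *
          ∫ r in Set.Ioi (0:ℝ), r ^ (s.re - 1) * Real.exp (-(-(2 * π * x.im) * r)) := by
    intro n
    rw [lerch_F_norm_integral, lerch_K_eq, hqdef]
  have hsum : Summable (fun n : ℕ => ∫ r in Set.Ioi (0:ℝ),
      ‖(r:ℂ) ^ (s-1) * Complex.exp (2 * (π:ℂ) * I * (t - r) * ((n:ℂ) + x))‖) := by
    apply Summable.congr _ (fun n => (hCα n).symm)
    apply Summable.mul_right
    apply Summable.mul_left
    exact summable_geometric_of_lt_one hq0.le hq1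
  -- swap sum and integral
  have hswap := MeasureTheory.integral_tsum_of_summable_integral_norm
    (F := fun (n : ℕ) (r : ℝ) =>
      (r:ℂ) ^ (s-1) * Complex.exp (2 * (π:ℂ) * I * (t - r) * ((n:ℂ) + x)))
    (μ := volume.restrict (Set.Ioi 0))
    (fun n => lerch_F_int hx hs n) hsum
  -- integral of the main integrand equals sum of integrals
  have hint_eq : ∫ r in Set.Ioi (0:ℝ),
      (r : ℂ) ^ (s - 1) * Complex.exp (2 * (π : ℂ) * I * (t - r) * x) /
        (1 - Complex.exp (2 * (π : ℂ) * I * (t - r)))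
      = ∑' n : ℕ, (∫ r in Set.Ioi (0:ℝ),
          (r:ℂ) ^ (s-1) * Complex.exp (2 * (π:ℂ) * I * (t - r) * ((n:ℂ) + x))) := by
    rw [hswap]
    apply setIntegral_congr_fun measurableSet_Ioi
    intro r _
    exact (lerch_geo_sum ht r).symm
  -- summability of the series (norm version)
  have hterm_eq : ∀ n : ℕ, ((n : ℂ) + x) ^ (-s) * Complex.exp (2 * (π : ℂ) * I * t * n)
      = ((2 * π : ℝ):ℂ) ^ s * Complex.exp ((π:ℂ) * I * (s / 2 - 2 * t * x)) *
        ((1 / Complex.Gamma s) *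
          ∫ r in Set.Ioi (0:ℝ),
            (r:ℂ) ^ (s-1) * Complex.exp (2 * (π:ℂ) * I * (t - r) * ((n:ℂ) + x))) := by
    intro n
    rw [lerch_F_integral hx hs n, lerch_term t x s hx hs n]
  have hsummable : Summable (fun n : ℕ =>
      ‖((n : ℂ) + x) ^ (-s) * Complex.exp (2 * (π : ℂ) * I * t * n)‖) := by
    have hbig := hsum.mul_left (‖((2 * π : ℝ):ℂ) ^ s *
      Complex.exp ((π:ℂ) * I * (s / 2 - 2 * t * x)) * (1 / Complex.Gamma s)‖)
    refine Summable.of_nonneg_of_le (fun n => norm_nonneg _)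
      (fun n => ?_) hbig
    rw [hterm_eq n]
    rw [show ((2 * π : ℝ):ℂ) ^ s * Complex.exp ((π:ℂ) * I * (s / 2 - 2 * t * x)) *
        ((1 / Complex.Gamma s) * ∫ r in Set.Ioi (0:ℝ),
          (r:ℂ) ^ (s-1) * Complex.exp (2 * (π:ℂ) * I * (t - r) * ((n:ℂ) + x)))
      = (((2 * π : ℝ):ℂ) ^ s * Complex.exp ((π:ℂ) * I * (s / 2 - 2 * t * x)) *
          (1 / Complex.Gamma s)) * ∫ r in Set.Ioi (0:ℝ),
          (r:ℂ) ^ (s-1) * Complex.exp (2 * (π:ℂ) * I * (t - r) * ((n:ℂ) + x)) by ring,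
      norm_mul]
    exact mul_le_mul_of_nonneg_left (norm_integral_le_integral_norm _) (norm_nonneg _)
  refine ⟨hsummable, ?_, ?_⟩
  · -- integrability of the integrand
    have habs1 : ∀ r : ℝ, ‖Complex.exp (2 * (π:ℂ) * I * (t - (r:ℂ)))‖ = q := by
      intro r
      rw [lerch_abs_exp, hqdef]
      congr 2
      simp
    have hcont : ContinuousOn (fun r : ℝ =>
        (r : ℂ) ^ (s - 1) * Complex.exp (2 * (π:ℂ) * I * (t - r) * x) /
          (1 - Complex.exp (2 * (π:ℂ) * I * (t - r)))) (Set.Ioi 0) := by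
      apply ContinuousOn.div
      · apply ContinuousOn.mul
        · intro r hr
          apply ContinuousAt.continuousWithinAt
          exact ContinuousAt.comp (continuousAt_cpow_const
            (Or.inl (by exact_mod_cast hr : (0:ℝ) < (r:ℂ).re)))
            Complex.continuous_ofReal.continuousAt
        · exact (Complex.continuous_exp.comp (by continuity)).continuousOn
      · apply Continuous.continuousOn
        continuity
      · intro r _ h
        have h1 : (1:ℂ) = Complex.exp (2 * (π:ℂ) * I * (t - (r:ℂ))) := sub_eq_zero.mp h
        have h2 := habs1 r
        rw [← h1, norm_one] at h2
        linarith
    have hbound := ((lerch_integrable (a := ((-(2*π*x.im) : ℝ):ℂ))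
        (by simpa using hα0) hs).norm.const_mul
      (Real.exp (-(2*π*(t*x).im)) * (1 - q)⁻¹))
    apply Integrable.mono' hbound (hcont.aestronglyMeasurable measurableSet_Ioi)
    filter_upwards [ae_restrict_mem measurableSet_Ioi] with r hr
    simp only [Set.mem_Ioi] at hr
    rw [norm_div]
    have hnum : ‖(r:ℂ) ^ (s-1) * Complex.exp (2 * (π:ℂ) * I * (t - (r:ℂ)) * x)‖
        = Real.exp (-(2*π*(t*x).im)) * (r ^ (s.re - 1) * Real.exp (-(-(2*π*x.im) * r))) := by
      rw [norm_mul, Complex.norm_cpow_eq_rpow_re_of_pos hr,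
        show 2 * (π:ℂ) * I * (t - (r:ℂ)) * x
          = 2 * (π:ℂ) * I * ((t - (r:ℂ)) * x) by ring, lerch_abs_exp]
      have him2 : ((t - (r:ℂ)) * x).im = (t*x).im - r * x.im := by
        simp [Complex.mul_im, Complex.sub_re, Complex.sub_im]
        ring
      rw [him2, show (s-1).re = s.re - 1 by simp,
        show -(2*π*((t*x).im - r * x.im)) = -(2*π*(t*x).im) + -(-(2*π*x.im) * r) by ring,
        Real.exp_add]
      ring
    rw [hnum]
    have hden : 1 - q ≤ ‖1 - Complex.exp (2 * (π:ℂ) * I * (t - (r:ℂ)))‖ := by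
      have h1 := norm_sub_norm_le (1:ℂ) (Complex.exp (2 * (π:ℂ) * I * (t - (r:ℂ))))
      rw [norm_one, habs1 r] at h1
      exact h1
    have hd0 : 0 < 1 - q := by linarith
    have hnn : 0 ≤ Real.exp (-(2*π*(t*x).im)) * (r ^ (s.re - 1) * Real.exp (-(-(2*π*x.im) * r))) := by
      positivity
    calc Real.exp (-(2*π*(t*x).im)) * (r ^ (s.re - 1) * Real.exp (-(-(2*π*x.im) * r))) /
          ‖1 - Complex.exp (2 * (π:ℂ) * I * (t - (r:ℂ)))‖
        ≤ Real.exp (-(2*π*(t*x).im)) * (r ^ (s.re - 1) * Real.exp (-(-(2*π*x.im) * r))) / (1 - q) :=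
          div_le_div_of_nonneg_left hnn hd0 hden
      _ = Real.exp (-(2*π*(t*x).im)) * (1 - q)⁻¹ *
            ‖(r:ℂ) ^ (s-1) * Complex.exp (-(((-(2*π*x.im) : ℝ):ℂ) * r))‖ := by
          rw [lerch_norm hr]
          rw [show ((-(2*π*x.im) : ℝ):ℂ).re = -(2*π*x.im) by simp]
          field_simp
  · -- main equality
    rw [hint_eq]
    rw [← tsum_mul_left, ← tsum_mul_left]
    exact tsum_congr hterm_eq
end
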